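/- arXiv:2202.05642 — 2 statements merged into one kernel-verified Lean document; each statement's English description precedes it below -/
import Mathlib

section
/- Let b = (b_ij) be a real 2×2 matrix, c1, c2 ≥ 0, and m1, m2 σ-finite measures on ℝ₊² supported by ℝ₊² \ {0} with ∫(z1 ∧ z1² + z2) m1(dz) + ∫(z2 ∧ z2² + z1) m2(dz) < ∞, satisfying b12 + ∫ z2 m1(dz) ≤ 0 and b21 + ∫ z1 m2(dz) ≤ 0. Define φ = (φ1, φ2) by φ1(λ) = b11 λ1 + b12 λ2 + c1 λ1² + ∫(e^{−⟨λ,z⟩} − 1 + ⟨λ,z⟩) m1(dz), φ2(λ) = b21 λ1 + b22 λ2 + c2 λ2² + ∫(e^{−⟨λ,z⟩} − 1 + ⟨λ,z⟩) m2(dz), and the local projections φ*₁(x) = (b11 + b12)x + c1 x² + ∫(e^{−x z1} − 1 + x z1) m1(dz), φ*₂(x) = (b21 + b22)x + c2 x² + ∫(e^{−x z2} − 1 + x z2) m2(dz) for x ≥ 0. Let φ⁰(x) = a0 x + c0 x² + ∫_0^∞ (e^{−x u} − 1 + x u) m0(du) (a0 ∈ ℝ, c0 ≥ 0, ∫(u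 ∧ u²) m0(du) < ∞) be a scalar branching mechanism with φ*₁(x) ≥ φ⁰(x) and φ*₂(x) ≥ φ⁰(x) for all x ≥ 0. Let r0 ≤ t, ξ : [r0, t] → ℝ measurable and bounded, λ = (λ1, λ2) ∈ ℝ₊², and suppose u : [r0, t] → ℝ₊² and w : [r0, t] → ℝ₊ are continuous and satisfy u^{(i)}(r) = λ_i − ∫_r^t e^{ξ(s)} φ_i(e^{−ξ(s)} u(s)) ds (i = 1, 2) and w(r) = max(λ1, λ2) − ∫_r^t e^{ξ(s)} φ⁰(e^{−ξ(s)} w(s)) ds for all r ∈ [r0, t]. Then u^{(i)}(r) ≤ w(r) for i = 1, 2 and all r ∈ [r0, t]. -/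
open MeasureTheory Real

/-- The closed first quadrant of `ℝ²`. -/
def quadrant : Set (ℝ × ℝ) := {p | 0 ≤ p.1 ∧ 0 ≤ p.2}

/-- First component of the two-type branching mechanism `φ`. -/
noncomputable def phi1 (b : Matrix (Fin 2) (Fin 2) ℝ) (c1 : ℝ) (m1 : Measure (ℝ × ℝ))
    (l : ℝ × ℝ) : ℝ :=
  b 0 0 * l.1 + b 0 1 * l.2 + c1 * l.1 ^ 2
    + ∫ z, (Real.exp (-(l.1 * z.1 + l.2 * z.2)) - 1 + (l.1 * z.1 + l.2 * z.2)) ∂m1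

/-- Second component of the two-type branching mechanism `φ`. -/
noncomputable def phi2 (b : Matrix (Fin 2) (Fin 2) ℝ) (c2 : ℝ) (m2 : Measure (ℝ × ℝ))
    (l : ℝ × ℝ) : ℝ :=
  b 1 0 * l.1 + b 1 1 * l.2 + c2 * l.2 ^ 2
    + ∫ z, (Real.exp (-(l.1 * z.1 + l.2 * z.2)) - 1 + (l.1 * z.1 + l.2 * z.2)) ∂m2

/-- First local projection `φ*₁` of `φ`. -/
noncomputable def phiStar1 (b : Matrix (Fin 2) (Fin 2) ℝ) (c1 : ℝ) (m1 : Measure (ℝ × ℝ))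
    (x : ℝ) : ℝ :=
  (b 0 0 + b 0 1) * x + c1 * x ^ 2 + ∫ z, (Real.exp (-(x * z.1)) - 1 + x * z.1) ∂m1

/-- Second local projection `φ*₂` of `φ`. -/
noncomputable def phiStar2 (b : Matrix (Fin 2) (Fin 2) ℝ) (c2 : ℝ) (m2 : Measure (ℝ × ℝ))
    (x : ℝ) : ℝ :=
  (b 1 0 + b 1 1) * x + c2 * x ^ 2 + ∫ z, (Real.exp (-(x * z.2)) - 1 + x * z.2) ∂m2

/-- The scalar branching mechanism `φ⁰`. -/
noncomputable def phi0 (a0 c0 : ℝ) (m0 : Measure ℝ) (x : ℝ) : ℝ :=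
  a0 * x + c0 * x ^ 2 + ∫ u, (Real.exp (-(x * u)) - 1 + x * u) ∂m0



lemma helE1 (a : ℝ) : 0 ≤ exp (-a) - 1 + a := by
  have := Real.add_one_le_exp (-a); linarith

-- E2
lemma helE2 {a : ℝ} (ha : 0 ≤ a) : exp (-a) - 1 + a ≤ a := by
  have : exp (-a) ≤ 1 := Real.exp_le_one_iff.mpr (by linarith)
  linarith

-- E3
lemma helE3 {a : ℝ} (ha : 0 ≤ a) : exp (-a) - 1 + a ≤ a ^ 2 := by
  rcases le_total a 1 with h | h
  · have h1 : |(-a)| ≤ 1 := by rw [abs_neg, abs_of_nonneg ha]; exact h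
    have := Real.abs_exp_sub_one_sub_id_le h1
    have h2 : exp (-a) - 1 - (-a) ≤ (-a)^2 := (abs_le.mp this).2
    nlinarith
  · have := helE2 ha; nlinarith

lemma helEmin {a : ℝ} (ha : 0 ≤ a) : exp (-a) - 1 + a ≤ min a (a ^ 2) :=
  le_min (helE2 ha) (helE3 ha)

-- one_sub_exp_le : 1 - e^{-a} ≤ a
lemma hel1me {a : ℝ} : 1 - exp (-a) ≤ a := by have := Real.add_one_le_exp (-a); linarith

lemma helexp_nonneg (a : ℝ) : (0:ℝ) ≤ exp a := (Real.exp_pos a).le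

-- scaling of min: min(xu, (xu)^2) ≤ (x + x^2) * min(u, u^2) for x,u ≥ 0
lemma helmin_scale {x u : ℝ} (hx : 0 ≤ x) (hu : 0 ≤ u) :
    min (x*u) ((x*u)^2) ≤ (x + x^2) * min u (u^2) := by
  rcases le_total u 1 with h | h
  · have h1 : min u (u^2) = u^2 := min_eq_right (by nlinarith)
    rw [h1]
    calc min (x*u) ((x*u)^2) ≤ (x*u)^2 := min_le_right _ _
    _ ≤ (x + x^2) * u^2 := by nlinarith
  · have h1 : min u (u^2) = u := min_eq_left (by nlinarith)
    rw [h1]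
    calc min (x*u) ((x*u)^2) ≤ x*u := min_le_left _ _
    _ ≤ (x + x^2) * u := by nlinarith

-- φ⁰ integrand nonneg and bound: 0 ≤ e^{-xu}-1+xu ≤ (x+x²) min(u,u²)
lemma helphi0_int_bd {x u : ℝ} (hx : 0 ≤ x) (hu : 0 ≤ u) :
    |exp (-(x*u)) - 1 + x*u| ≤ (x + x^2) * min u (u^2) := by
  rw [abs_of_nonneg (helE1 _)]
  exact le_trans (helEmin (by positivity)) (helmin_scale hx hu)

-- E4: difference bound for φ⁰ integrand, 0 ≤ v ≤ x ≤ M, u ≥ 0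
lemma helE4 {v x u M : ℝ} (hv : 0 ≤ v) (hvx : v ≤ x) (hxM : x ≤ M) (hu : 0 ≤ u) :
    0 ≤ exp (-(x*u)) - exp (-(v*u)) + (x - v)*u ∧
    exp (-(x*u)) - exp (-(v*u)) + (x - v)*u ≤ (x - v) * ((1 + M) * min u (u^2)) := by
  have hd : 0 ≤ x - v := by linarith
  have key : exp (-(x*u)) = exp (-(v*u)) * exp (-((x-v)*u)) := by
    rw [← Real.exp_add]; ring_nf
  constructor
  · -- e^{-vu} - e^{-xu} ≤ (x-v)u : e^{-vu}(1 - e^{-du}) ≤ 1 - e^{-du} ≤ du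
    have h1 : exp (-(v*u)) * (1 - exp (-((x-v)*u))) ≤ 1 * (1 - exp (-((x-v)*u))) := by
      apply mul_le_mul_of_nonneg_right (Real.exp_le_one_iff.mpr (by nlinarith)) ?_
      have : exp (-((x-v)*u)) ≤ 1 := Real.exp_le_one_iff.mpr (by nlinarith)
      linarith
    have h2 : 1 - exp (-((x-v)*u)) ≤ (x-v)*u := hel1me
    rw [key]; nlinarith
  ·
    have hEv1 : exp (-(v*u)) ≤ 1 := Real.exp_le_one_iff.mpr (by nlinarith)
    -- bound 1: h ≤ (x-v)*u
    have hb1 : exp (-(x*u)) - exp (-(v*u)) + (x - v)*u ≤ (x - v)*u := by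
      rw [key]
      have : exp (-(v*u)) * exp (-((x-v)*u)) ≤ exp (-(v*u)) * 1 := by
        apply mul_le_mul_of_nonneg_left (Real.exp_le_one_iff.mpr (by nlinarith)) (helexp_nonneg _)
      linarith
    -- bound 2: h ≤ (x-v)*M*u²
    have hb2 : exp (-(x*u)) - exp (-(v*u)) + (x - v)*u ≤ (x - v)*(M*u^2) := by
      have hq : exp (-((x-v)*u)) - 1 + (x-v)*u ≤ ((x-v)*u)^2 := helE3 (by positivity)
      have h1me : 1 - exp (-(v*u)) ≤ v*u := hel1me
      have hE1 : 0 ≤ exp (-((x-v)*u)) - 1 + (x-v)*u := helE1 _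
      -- h = e^{-vu}*(e^{-du}-1+du) + du*(1-e^{-vu})
      have hid : exp (-(x*u)) - exp (-(v*u)) + (x - v)*u
          = exp (-(v*u)) * (exp (-((x-v)*u)) - 1 + (x-v)*u) + (x-v)*u*(1 - exp (-(v*u))) := by
        rw [key]; ring
      rw [hid]
      have t1 : exp (-(v*u)) * (exp (-((x-v)*u)) - 1 + (x-v)*u) ≤ ((x-v)*u)^2 := by
        calc _ ≤ 1 * (exp (-((x-v)*u)) - 1 + (x-v)*u) := mul_le_mul_of_nonneg_right hEv1 hE1
        _ ≤ ((x-v)*u)^2 := by linarith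
      have t2 : (x-v)*u*(1 - exp (-(v*u))) ≤ (x-v)*u*(v*u) := by
        apply mul_le_mul_of_nonneg_left h1me (by positivity)
      nlinarith [mul_nonneg (mul_nonneg hd hu) hu, mul_le_mul_of_nonneg_left hxM (mul_nonneg (mul_nonneg hd hu) hu)]
    rcases le_total u 1 with h | h
    · have h1 : min u (u^2) = u^2 := min_eq_right (by nlinarith)
      rw [h1]; nlinarith
    · have h1 : min u (u^2) = u := min_eq_left (by nlinarith)
      rw [h1]; nlinarith

-- G: g(z) = e^{-(a+b)} - e^{-a} + b, with a = x z1, b = y z2, a,b ≥ 0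
lemma helG_nonneg {a b : ℝ} (ha : 0 ≤ a) (hb : 0 ≤ b) :
    0 ≤ exp (-(a+b)) - exp (-a) + b := by
  have key : exp (-(a+b)) = exp (-a) * exp (-b) := by rw [← Real.exp_add]; ring_nf
  have h1 : exp (-a) * (1 - exp (-b)) ≤ 1 * (1 - exp (-b)) := by
    apply mul_le_mul_of_nonneg_right (Real.exp_le_one_iff.mpr (by linarith))
    have : exp (-b) ≤ 1 := Real.exp_le_one_iff.mpr (by linarith)
    linarith
  have h2 : 1 - exp (-b) ≤ b := hel1me
  rw [key]; nlinarith

lemma helG_le {a b : ℝ} (ha : 0 ≤ a) (hb : 0 ≤ b) :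
    exp (-(a+b)) - exp (-a) + b ≤ b := by
  have key : exp (-(a+b)) = exp (-a) * exp (-b) := by rw [← Real.exp_add]; ring_nf
  have h1 : exp (-a) * exp (-b) ≤ exp (-a) * 1 :=
    mul_le_mul_of_nonneg_left (Real.exp_le_one_iff.mpr (by linarith)) (helexp_nonneg _)
  rw [key]; linarith

-- if b' ≥ b contribution: for y ≤ x case: g ≥ (y-x) z2, phrased as: b - a' ≤ g where...
-- precisely with a = x z1, b = y z2, need: e^{-(a+b)} - e^{-a} + b ≥ (y-x) z2 when 0 ≤ y ≤ x, z1,z2 ≥ 0.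
lemma helG_ge {x y z1 z2 : ℝ} (hy : 0 ≤ y) (hyx : y ≤ x) (hz1 : 0 ≤ z1) (hz2 : 0 ≤ z2) :
    (y - x) * z2 ≤ exp (-(x*z1 + y*z2)) - exp (-(x*z1)) + y*z2 := by
  have key : exp (-(x*z1 + y*z2)) = exp (-(x*z1)) * exp (-(y*z2)) := by
    rw [← Real.exp_add]; ring_nf
  -- e^{-a}(1 - e^{-b}) ≤ 1*(1-e^{-b}) ≤ b = y z2 ≤ x z2
  have hxz : 0 ≤ x*z1 := mul_nonneg (le_trans hy hyx) hz1
  have h1 : exp (-(x*z1)) * (1 - exp (-(y*z2))) ≤ 1 * (1 - exp (-(y*z2))) := by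
    have hyz : 0 ≤ y * z2 := by positivity
    apply mul_le_mul_of_nonneg_right (Real.exp_le_one_iff.mpr (by linarith))
    have : exp (-(y*z2)) ≤ 1 := Real.exp_le_one_iff.mpr (by linarith)
    linarith
  have h2 : 1 - exp (-(y*z2)) ≤ y*z2 := hel1me
  have h3 : y * z2 ≤ x * z2 := mul_le_mul_of_nonneg_right hyx hz2
  rw [key]; nlinarith

-- bound for the φ1 integrand: 0 ≤ f ≤ (x+x²)min(z1,z1²) + (1+(y+y²))z2 ≤ ...
lemma helphi1_int_bd {x y z1 z2 : ℝ} (hx : 0 ≤ x) (hy : 0 ≤ y) (hz1 : 0 ≤ z1) (hz2 : 0 ≤ z2) :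
    |exp (-(x*z1 + y*z2)) - 1 + (x*z1 + y*z2)|
      ≤ (x + x^2) * min z1 (z1^2) + y * z2 := by
  have ha : 0 ≤ x*z1 := by positivity
  have hb : 0 ≤ y*z2 := by positivity
  have hdecomp : exp (-(x*z1 + y*z2)) - 1 + (x*z1 + y*z2)
      = (exp (-(x*z1)) - 1 + x*z1) + (exp (-(x*z1 + y*z2)) - exp (-(x*z1)) + y*z2) := by ring
  rw [abs_of_nonneg (helE1 _), hdecomp]
  have h1 : exp (-(x*z1)) - 1 + x*z1 ≤ (x + x^2) * min z1 (z1^2) :=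
    le_trans (helEmin ha) (helmin_scale hx hz1)
  have h2 : exp (-(x*z1 + y*z2)) - exp (-(x*z1)) + y*z2 ≤ y*z2 := by
    have := helG_le ha hb
    have he : x*z1 + y*z2 = x*z1 + y*z2 := rfl
    linarith [helG_le ha hb]
  linarith

section Gen
variable {α : Type*} [MeasurableSpace α] {m : Measure α} {ζl ζc : α → ℝ}

-- integrability of the two-type integrand
lemma genInt (hml : Measurable ζl) (hmc : Measurable ζc)
    (hae : ∀ᵐ z ∂m, 0 ≤ ζl z ∧ 0 ≤ ζc z)
    (hmom : Integrable (fun z => min (ζl z) (ζl z ^ 2) + ζc z) m)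
    {x y : ℝ} (hx : 0 ≤ x) (hy : 0 ≤ y) :
    Integrable (fun z => exp (-(x * ζl z + y * ζc z)) - 1 + (x * ζl z + y * ζc z)) m := by
  apply Integrable.mono' (hmom.const_mul (x + x^2 + y + 1))
  · apply Measurable.aestronglyMeasurable
    fun_prop
  · filter_upwards [hae] with z hz
    obtain ⟨h1, h2⟩ := hz
    have hb := helphi1_int_bd hx hy h1 h2
    have hmin : 0 ≤ min (ζl z) (ζl z ^ 2) := le_min h1 (sq_nonneg _)
    calc |exp (-(x * ζl z + y * ζc z)) - 1 + (x * ζl z + y * ζc z)|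
        ≤ (x + x^2) * min (ζl z) (ζl z ^ 2) + y * ζc z := hb
      _ ≤ (x + x^2 + y + 1) * (min (ζl z) (ζl z ^ 2) + ζc z) := by nlinarith

lemma genIntC (hml : Measurable ζl) (hmc : Measurable ζc)
    (hae : ∀ᵐ z ∂m, 0 ≤ ζl z ∧ 0 ≤ ζc z)
    (hmom : Integrable (fun z => min (ζl z) (ζl z ^ 2) + ζc z) m) :
    Integrable ζc m := by
  apply Integrable.mono' hmom (hmc.aestronglyMeasurable)
  filter_upwards [hae] with z hz
  obtain ⟨h1, h2⟩ := hz
  have hmin : 0 ≤ min (ζl z) (ζl z ^ 2) := le_min h1 (sq_nonneg _)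
  rw [Real.norm_eq_abs, abs_of_nonneg h2]; linarith

-- main comparison: case 0 ≤ y ≤ x
lemma genCmp_le (hml : Measurable ζl) (hmc : Measurable ζc)
    (hae : ∀ᵐ z ∂m, 0 ≤ ζl z ∧ 0 ≤ ζc z)
    (hmom : Integrable (fun z => min (ζl z) (ζl z ^ 2) + ζc z) m)
    {x y : ℝ} (hy : 0 ≤ y) (hyx : y ≤ x) :
    (y - x) * ∫ z, ζc z ∂m ≤
      (∫ z, (exp (-(x * ζl z + y * ζc z)) - 1 + (x * ζl z + y * ζc z)) ∂m)
      - ∫ z, (exp (-(x * ζl z)) - 1 + x * ζl z) ∂m := by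
  have hx : 0 ≤ x := le_trans hy hyx
  have hI1 := genInt hml hmc hae hmom hx hy
  have hI2 : Integrable (fun z => exp (-(x * ζl z)) - 1 + x * ζl z) m := by
    have := genInt hml hmc hae hmom hx (le_refl 0)
    simpa using this
  have hIc := genIntC hml hmc hae hmom
  rw [← integral_sub hI1 hI2, ← integral_const_mul]
  apply integral_mono_ae (hIc.const_mul _) (hI1.sub hI2)
  filter_upwards [hae] with z hz
  obtain ⟨h1, h2⟩ := hz
  simp only [Pi.sub_apply]
  nlinarith [helG_ge hy hyx h1 h2]

-- main comparison: general nonneg x,y: difference ≥ 0 when y ≤ x handled above; here ≥ 0 case any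
lemma genCmp_nonneg (hml : Measurable ζl) (hmc : Measurable ζc)
    (hae : ∀ᵐ z ∂m, 0 ≤ ζl z ∧ 0 ≤ ζc z)
    (hmom : Integrable (fun z => min (ζl z) (ζl z ^ 2) + ζc z) m)
    {x y : ℝ} (hx : 0 ≤ x) (hy : 0 ≤ y) :
    (0:ℝ) ≤
      (∫ z, (exp (-(x * ζl z + y * ζc z)) - 1 + (x * ζl z + y * ζc z)) ∂m)
      - ∫ z, (exp (-(x * ζl z)) - 1 + x * ζl z) ∂m := by
  have hI1 := genInt hml hmc hae hmom hx hy
  have hI2 : Integrable (fun z => exp (-(x * ζl z)) - 1 + x * ζl z) m := by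
    have := genInt hml hmc hae hmom hx (le_refl 0)
    simpa using this
  rw [← integral_sub hI1 hI2]
  apply integral_nonneg_of_ae
  filter_upwards [hae] with z hz
  obtain ⟨h1, h2⟩ := hz
  simp only [Pi.zero_apply]
  nlinarith [helG_nonneg (a := x * ζl z) (b := y * ζc z) (mul_nonneg hx h1) (mul_nonneg hy h2)]

-- bounds on the integral term
lemma genBd (hml : Measurable ζl) (hmc : Measurable ζc)
    (hae : ∀ᵐ z ∂m, 0 ≤ ζl z ∧ 0 ≤ ζc z)
    (hmom : Integrable (fun z => min (ζl z) (ζl z ^ 2) + ζc z) m)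
    {x y : ℝ} (hx : 0 ≤ x) (hy : 0 ≤ y) :
    0 ≤ (∫ z, (exp (-(x * ζl z + y * ζc z)) - 1 + (x * ζl z + y * ζc z)) ∂m) ∧
    (∫ z, (exp (-(x * ζl z + y * ζc z)) - 1 + (x * ζl z + y * ζc z)) ∂m)
      ≤ (x + x^2 + y + 1) * ∫ z, (min (ζl z) (ζl z ^ 2) + ζc z) ∂m := by
  have hI1 := genInt hml hmc hae hmom hx hy
  constructor
  · apply integral_nonneg_of_ae
    filter_upwards [hae] with z hz
    exact helE1 _
  · rw [← integral_const_mul]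
    apply integral_mono_ae hI1 (hmom.const_mul _)
    filter_upwards [hae] with z hz
    obtain ⟨h1, h2⟩ := hz
    have hb := helphi1_int_bd hx hy h1 h2
    have hmin : 0 ≤ min (ζl z) (ζl z ^ 2) := le_min h1 (sq_nonneg _)
    have : exp (-(x * ζl z + y * ζc z)) - 1 + (x * ζl z + y * ζc z)
        ≤ |exp (-(x * ζl z + y * ζc z)) - 1 + (x * ζl z + y * ζc z)| := le_abs_self _
    nlinarith [le_abs_self (exp (-(x * ζl z + y * ζc z)) - 1 + (x * ζl z + y * ζc z))]
end Gen

section mt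
variable {α : Type*} [MeasurableSpace α] {m : Measure α}

lemma intOfLin {f : α → ℝ} (hm : Measurable f) (h0 : ∀ᵐ z ∂m, 0 ≤ f z)
    (hfin : ∫⁻ z, ENNReal.ofReal (f z) ∂m < ⊤) : Integrable f m := by
  refine ⟨hm.aestronglyMeasurable, ?_⟩
  rw [MeasureTheory.HasFiniteIntegral]
  rwa [lintegral_congr_ae (h0.mono fun z hz => Real.enorm_eq_ofReal hz)]
end mt


lemma ae_quadrant {m : Measure (ℝ × ℝ)} (hsupp : m quadrantᶜ = 0) :
    ∀ᵐ z ∂m, 0 ≤ z.1 ∧ 0 ≤ z.2 := by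
  rw [MeasureTheory.ae_iff]
  exact hsupp

-- integrability of the moment function for m1-type measure
lemma mom_integrable1 {m : Measure (ℝ × ℝ)} (hsupp : m quadrantᶜ = 0)
    (hmom : ∫⁻ z, ENNReal.ofReal (min z.1 (z.1 ^ 2) + z.2) ∂m < ⊤) :
    Integrable (fun z => min z.1 (z.1 ^ 2) + z.2) m := by
  apply intOfLin (by fun_prop) ?_ hmom
  filter_upwards [ae_quadrant hsupp] with z hz
  have : 0 ≤ min z.1 (z.1^2) := le_min hz.1 (sq_nonneg _)
  linarith [hz.2]

lemma mom_integrable2 {m : Measure (ℝ × ℝ)} (hsupp : m quadrantᶜ = 0)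
    (hmom : ∫⁻ z, ENNReal.ofReal (min z.2 (z.2 ^ 2) + z.1) ∂m < ⊤) :
    Integrable (fun z => min z.2 (z.2 ^ 2) + z.1) m := by
  apply intOfLin (by fun_prop) ?_ hmom
  filter_upwards [ae_quadrant hsupp] with z hz
  have : 0 ≤ min z.2 (z.2^2) := le_min hz.2 (sq_nonneg _)
  linarith [hz.1]

lemma mom_integrable0 {m : Measure ℝ} (hsupp : m (Set.Iic 0) = 0)
    (hmom : ∫⁻ u, ENNReal.ofReal (min u (u ^ 2)) ∂m < ⊤) :
    Integrable (fun u => min u (u ^ 2)) m := by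
  apply intOfLin (by fun_prop) ?_ hmom
  have : ∀ᵐ u ∂m, 0 < u := by
    rw [MeasureTheory.ae_iff]
    have : {u : ℝ | ¬ 0 < u} = Set.Iic 0 := by ext u; simp
    rw [this]; exact hsupp
  filter_upwards [this] with u hu
  exact le_min hu.le (sq_nonneg _)

lemma ae_pos0 {m : Measure ℝ} (hsupp : m (Set.Iic 0) = 0) : ∀ᵐ u ∂m, 0 ≤ u := by
  rw [MeasureTheory.ae_iff]
  have : {u : ℝ | ¬ 0 ≤ u} ⊆ Set.Iic 0 := by intro u; simp; intro h; linarith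
  exact measure_mono_null this hsupp

section Phi0
variable {m : Measure ℝ}

lemma phi0Int (hIm : Integrable (fun u => min u (u ^ 2)) m) (hae : ∀ᵐ u ∂m, 0 ≤ u)
    {x : ℝ} (hx : 0 ≤ x) :
    Integrable (fun u => exp (-(x*u)) - 1 + x*u) m := by
  have hm : Measurable (fun u : ℝ => exp (-(x*u)) - 1 + x*u) := by fun_prop
  apply Integrable.mono' (hIm.const_mul (x + x^2)) hm.aestronglyMeasurable
  filter_upwards [hae] with u hu
  exact helphi0_int_bd hx hu

lemma phi0IntBd (hIm : Integrable (fun u => min u (u ^ 2)) m) (hae : ∀ᵐ u ∂m, 0 ≤ u)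
    {x : ℝ} (hx : 0 ≤ x) :
    0 ≤ (∫ u, (exp (-(x*u)) - 1 + x*u) ∂m) ∧
    (∫ u, (exp (-(x*u)) - 1 + x*u) ∂m) ≤ (x + x^2) * ∫ u, min u (u^2) ∂m := by
  constructor
  · apply integral_nonneg_of_ae; filter_upwards [hae] with u hu; exact helE1 _
  · rw [← integral_const_mul]
    apply integral_mono_ae (phi0Int hIm hae hx) (hIm.const_mul _)
    filter_upwards [hae] with u hu
    exact le_trans (le_abs_self _) (helphi0_int_bd hx hu)

lemma phi0IntLip (hIm : Integrable (fun u => min u (u ^ 2)) m) (hae : ∀ᵐ u ∂m, 0 ≤ u)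
    {v x M : ℝ} (hv : 0 ≤ v) (hvx : v ≤ x) (hxM : x ≤ M) :
    0 ≤ (∫ u, (exp (-(x*u)) - 1 + x*u) ∂m) - (∫ u, (exp (-(v*u)) - 1 + v*u) ∂m) ∧
    (∫ u, (exp (-(x*u)) - 1 + x*u) ∂m) - (∫ u, (exp (-(v*u)) - 1 + v*u) ∂m)
      ≤ (x - v) * ((1 + M) * ∫ u, min u (u^2) ∂m) := by
  have hx : 0 ≤ x := le_trans hv hvx
  have hIx := phi0Int hIm hae hx
  have hIv := phi0Int hIm hae hv
  rw [← integral_sub hIx hIv]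
  constructor
  · apply integral_nonneg_of_ae
    filter_upwards [hae] with u hu
    have := (helE4 hv hvx hxM hu).1
    simp only [Pi.zero_apply]; linarith
  · rw [← integral_const_mul, ← integral_const_mul]
    apply integral_mono_ae (hIx.sub hIv) ((hIm.const_mul _).const_mul _)
    filter_upwards [hae] with u hu
    have := (helE4 hv hvx hxM hu).2
    simp only [Pi.sub_apply]; linarith
end Phi0

section PhiLevel
-- key lower bound for phi1
lemma phi1_ge (b : Matrix (Fin 2) (Fin 2) ℝ) (c1 : ℝ) (m1 : Measure (ℝ × ℝ))
    (hsupp1 : m1 quadrantᶜ = 0)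
    (hIm1 : Integrable (fun z => min z.1 (z.1 ^ 2) + z.2) m1)
    (hadm1 : b 0 1 + ∫ z, z.2 ∂m1 ≤ 0)
    {x y : ℝ} (hx : 0 ≤ x) (hy : 0 ≤ y) :
    phiStar1 b c1 m1 x - |b 0 1| * max (y - x) 0 ≤ phi1 b c1 m1 (x, y) := by
  have hae := ae_quadrant hsupp1
  simp only [phi1, phiStar1]
  rcases le_total y x with hyx | hxy
  · have h := genCmp_le (m := m1) measurable_fst measurable_snd hae hIm1 hy hyx
    have hmax : max (y - x) 0 = 0 := max_eq_right (by linarith)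
    rw [hmax]
    have hprod : 0 ≤ (y - x) * (b 0 1 + ∫ z, z.2 ∂m1) := by
      have := mul_nonneg (neg_nonneg.mpr (by linarith : y - x ≤ 0)) (neg_nonneg.mpr hadm1)
      nlinarith
    nlinarith [h]
  · have h := genCmp_nonneg (m := m1) measurable_fst measurable_snd hae hIm1 hx hy
    have hmax : max (y - x) 0 = y - x := max_eq_left (by linarith)
    rw [hmax]
    nlinarith [h, neg_abs_le (b 0 1), abs_nonneg (b 0 1)]

-- key lower bound for phi2 (local coordinate is the second one)
lemma phi2_ge (b : Matrix (Fin 2) (Fin 2) ℝ) (c2 : ℝ) (m2 : Measure (ℝ × ℝ))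
    (hsupp2 : m2 quadrantᶜ = 0)
    (hIm2 : Integrable (fun z => min z.2 (z.2 ^ 2) + z.1) m2)
    (hadm2 : b 1 0 + ∫ z, z.1 ∂m2 ≤ 0)
    {x y : ℝ} (hx : 0 ≤ x) (hy : 0 ≤ y) :
    -- here x is the second (local) variable, y the first (cross) one
    phiStar2 b c2 m2 x - |b 1 0| * max (y - x) 0 ≤ phi2 b c2 m2 (y, x) := by
  have hae : ∀ᵐ z ∂m2, 0 ≤ z.2 ∧ 0 ≤ z.1 := by
    filter_upwards [ae_quadrant hsupp2] with z hz; exact ⟨hz.2, hz.1⟩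
  simp only [phi2, phiStar2]
  have hcomm : (fun z : ℝ × ℝ => exp (-(y * z.1 + x * z.2)) - 1 + (y * z.1 + x * z.2))
      = (fun z : ℝ × ℝ => exp (-(x * z.2 + y * z.1)) - 1 + (x * z.2 + y * z.1)) := by
    funext z; rw [add_comm (y * z.1) (x * z.2)]
  rcases le_total y x with hyx | hxy
  · have h := genCmp_le (m := m2) (ζl := fun z => z.2) (ζc := fun z => z.1)
      measurable_snd measurable_fst hae hIm2 hy hyx
    have hmax : max (y - x) 0 = 0 := max_eq_right (by linarith)
    rw [hmax, hcomm]
    have hprod : 0 ≤ (y - x) * (b 1 0 + ∫ z, z.1 ∂m2) := by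
      have := mul_nonneg (neg_nonneg.mpr (by linarith : y - x ≤ 0)) (neg_nonneg.mpr hadm2)
      nlinarith
    nlinarith [h]
  · have h := genCmp_nonneg (m := m2) (ζl := fun z => z.2) (ζc := fun z => z.1)
      measurable_snd measurable_fst hae hIm2 hx hy
    have hmax : max (y - x) 0 = y - x := max_eq_left (by linarith)
    rw [hmax, hcomm]
    nlinarith [h, neg_abs_le (b 1 0), abs_nonneg (b 1 0)]
end PhiLevel

section PhiLevel2
variable {m0 : Measure ℝ}

-- ordered Lipschitz-type bounds for phi0
lemma phi0_lip_ord (a0 c0 : ℝ) (hc0 : 0 ≤ c0)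
    (hIm : Integrable (fun u => min u (u ^ 2)) m0) (hae : ∀ᵐ u ∂m0, 0 ≤ u)
    {v x M : ℝ} (hv : 0 ≤ v) (hvx : v ≤ x) (hxM : x ≤ M) :
    -((|a0| + 2*c0*M + (1 + M) * ∫ u, min u (u^2) ∂m0) * (x - v)) ≤
        phi0 a0 c0 m0 x - phi0 a0 c0 m0 v ∧
      phi0 a0 c0 m0 x - phi0 a0 c0 m0 v ≤
        (|a0| + 2*c0*M + (1 + M) * ∫ u, min u (u^2) ∂m0) * (x - v) := by
  have hIm0 : 0 ≤ ∫ u, min u (u^2) ∂m0 := by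
    apply integral_nonneg_of_ae
    filter_upwards [hae] with u hu
    exact le_min hu (sq_nonneg _)
  obtain ⟨hD0, hD1⟩ := phi0IntLip hIm hae hv hvx hxM
  simp only [phi0]
  have hM : (0:ℝ) ≤ M := by linarith
  have hd : (0:ℝ) ≤ x - v := by linarith
  have h1 : -(|a0| * (x - v)) ≤ a0 * (x - v) := by
    nlinarith [mul_le_mul_of_nonneg_right (neg_abs_le a0) hd]
  have h1' : a0 * (x - v) ≤ |a0| * (x - v) :=
    mul_le_mul_of_nonneg_right (le_abs_self a0) hd
  have h2 : (0:ℝ) ≤ c0 * (x^2 - v^2) := by nlinarith [mul_nonneg hc0 (mul_nonneg hd (by linarith : (0:ℝ) ≤ x + v))]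
  have h2' : c0 * (x^2 - v^2) ≤ 2*c0*M*(x - v) := by
    nlinarith [mul_nonneg hc0 (mul_nonneg hd (by nlinarith : (0:ℝ) ≤ 2*M - (x + v)))]
  have h3 : (0:ℝ) ≤ 2*c0*M*(x-v) := by positivity
  have h4 : (0:ℝ) ≤ ((1 + M) * ∫ u, min u (u^2) ∂m0) * (x - v) := by
    apply mul_nonneg (mul_nonneg (by linarith) hIm0) hd
  constructor
  · nlinarith
  · nlinarith
end PhiLevel2

section PhiLevel3
variable {m0 : Measure ℝ}

-- unordered one-sided Lipschitz lower bound for phi0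
lemma phi0_lip (a0 c0 : ℝ) (hc0 : 0 ≤ c0)
    (hIm : Integrable (fun u => min u (u ^ 2)) m0) (hae : ∀ᵐ u ∂m0, 0 ≤ u)
    {v x M : ℝ} (hv : 0 ≤ v) (hx : 0 ≤ x) (hvM : v ≤ M) (hxM : x ≤ M) :
    -((|a0| + 2*c0*M + (1 + M) * ∫ u, min u (u^2) ∂m0) * |x - v|) ≤
        phi0 a0 c0 m0 x - phi0 a0 c0 m0 v := by
  rcases le_total v x with h | h
  · rw [abs_of_nonneg (by linarith : (0:ℝ) ≤ x - v)]
    exact (phi0_lip_ord a0 c0 hc0 hIm hae hv h hxM).1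
  · rw [abs_of_nonpos (by linarith : x - v ≤ 0)]
    have := (phi0_lip_ord a0 c0 hc0 hIm hae hx h hvM).2
    linarith

-- bound on phi0
lemma phi0_bd (a0 c0 : ℝ) (hc0 : 0 ≤ c0)
    (hIm : Integrable (fun u => min u (u ^ 2)) m0) (hae : ∀ᵐ u ∂m0, 0 ≤ u)
    {x M : ℝ} (hx : 0 ≤ x) (hxM : x ≤ M) :
    |phi0 a0 c0 m0 x| ≤ |a0| * M + c0 * M^2 + (M + M^2) * ∫ u, min u (u^2) ∂m0 := by
  have hM : (0:ℝ) ≤ M := le_trans hx hxM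
  have hIm0 : 0 ≤ ∫ u, min u (u^2) ∂m0 := by
    apply integral_nonneg_of_ae
    filter_upwards [hae] with u hu
    exact le_min hu (sq_nonneg _)
  obtain ⟨hD0, hD1⟩ := phi0IntBd hIm hae hx
  simp only [phi0]
  rw [abs_le]
  have ha1 : -( |a0| * M) ≤ a0 * x ∧ a0 * x ≤ |a0| * M := by
    constructor <;> nlinarith [neg_abs_le a0, le_abs_self a0, abs_nonneg a0]
  have hcx : 0 ≤ c0 * x^2 ∧ c0 * x^2 ≤ c0 * M^2 := by
    constructor
    · positivity
    · nlinarith [mul_le_mul_of_nonneg_left (by nlinarith : x^2 ≤ M^2) hc0]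
  have hDup : (∫ u, (exp (-(x*u)) - 1 + x*u) ∂m0) ≤ (M + M^2) * ∫ u, min u (u^2) ∂m0 := by
    calc (∫ u, (exp (-(x*u)) - 1 + x*u) ∂m0) ≤ (x + x^2) * ∫ u, min u (u^2) ∂m0 := hD1
    _ ≤ (M + M^2) * ∫ u, min u (u^2) ∂m0 := by
        apply mul_le_mul_of_nonneg_right (by nlinarith) hIm0
  constructor
  · nlinarith [mul_nonneg (by nlinarith : (0:ℝ) ≤ M + M^2) hIm0]
  · nlinarith
end PhiLevel3

section PhiBd
-- bound on phi1 on the quadrant box [0,M]²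
lemma phi1_bd (b : Matrix (Fin 2) (Fin 2) ℝ) (c1 : ℝ) (hc1 : 0 ≤ c1) (m1 : Measure (ℝ × ℝ))
    (hsupp1 : m1 quadrantᶜ = 0)
    (hIm1 : Integrable (fun z => min z.1 (z.1 ^ 2) + z.2) m1)
    {x y M : ℝ} (hx : 0 ≤ x) (hy : 0 ≤ y) (hxM : x ≤ M) (hyM : y ≤ M) :
    |phi1 b c1 m1 (x, y)| ≤ (|b 0 0| + |b 0 1|) * M + c1 * M^2
      + (2*M + M^2 + 1) * ∫ z, (min z.1 (z.1 ^ 2) + z.2) ∂m1 := by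
  have hM : (0:ℝ) ≤ M := le_trans hx hxM
  have hae := ae_quadrant hsupp1
  have hIm0 : 0 ≤ ∫ z, (min z.1 (z.1 ^ 2) + z.2) ∂m1 := by
    apply integral_nonneg_of_ae
    filter_upwards [hae] with z hz
    have : 0 ≤ min z.1 (z.1^2) := le_min hz.1 (sq_nonneg _)
    simp only [Pi.zero_apply]; linarith [hz.2]
  obtain ⟨hD0, hD1⟩ := genBd (m := m1) measurable_fst measurable_snd hae hIm1 hx hy
  have hDup : (∫ z, (exp (-(x * z.1 + y * z.2)) - 1 + (x * z.1 + y * z.2)) ∂m1)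
      ≤ (2*M + M^2 + 1) * ∫ z, (min z.1 (z.1 ^ 2) + z.2) ∂m1 := by
    calc _ ≤ (x + x^2 + y + 1) * ∫ z, (min z.1 (z.1 ^ 2) + z.2) ∂m1 := hD1
    _ ≤ _ := by apply mul_le_mul_of_nonneg_right (by nlinarith) hIm0
  simp only [phi1]
  rw [abs_le]
  constructor
  · nlinarith [neg_abs_le (b 0 0), neg_abs_le (b 0 1), abs_nonneg (b 0 0), abs_nonneg (b 0 1),
      mul_nonneg hc1 (sq_nonneg x), mul_nonneg (by nlinarith : (0:ℝ) ≤ 2*M + M^2 + 1) hIm0,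
      mul_le_mul_of_nonneg_right (neg_abs_le (b 0 0)) hx,
      mul_le_mul_of_nonneg_right (neg_abs_le (b 0 1)) hy,
      mul_le_mul_of_nonneg_left hxM (abs_nonneg (b 0 0)),
      mul_le_mul_of_nonneg_left hyM (abs_nonneg (b 0 1))]
  · nlinarith [mul_le_mul_of_nonneg_right (le_abs_self (b 0 0)) hx,
      mul_le_mul_of_nonneg_right (le_abs_self (b 0 1)) hy,
      mul_le_mul_of_nonneg_left hxM (abs_nonneg (b 0 0)),
      mul_le_mul_of_nonneg_left hyM (abs_nonneg (b 0 1)),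
      mul_le_mul_of_nonneg_left (by nlinarith : x^2 ≤ M^2) hc1]

lemma phi2_bd (b : Matrix (Fin 2) (Fin 2) ℝ) (c2 : ℝ) (hc2 : 0 ≤ c2) (m2 : Measure (ℝ × ℝ))
    (hsupp2 : m2 quadrantᶜ = 0)
    (hIm2 : Integrable (fun z => min z.2 (z.2 ^ 2) + z.1) m2)
    {x y M : ℝ} (hx : 0 ≤ x) (hy : 0 ≤ y) (hxM : x ≤ M) (hyM : y ≤ M) :
    |phi2 b c2 m2 (y, x)| ≤ (|b 1 0| + |b 1 1|) * M + c2 * M^2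
      + (2*M + M^2 + 1) * ∫ z, (min z.2 (z.2 ^ 2) + z.1) ∂m2 := by
  have hM : (0:ℝ) ≤ M := le_trans hx hxM
  have hae : ∀ᵐ z ∂m2, 0 ≤ z.2 ∧ 0 ≤ z.1 := by
    filter_upwards [ae_quadrant hsupp2] with z hz; exact ⟨hz.2, hz.1⟩
  have hIm0 : 0 ≤ ∫ z, (min z.2 (z.2 ^ 2) + z.1) ∂m2 := by
    apply integral_nonneg_of_ae
    filter_upwards [hae] with z hz
    have : 0 ≤ min z.2 (z.2^2) := le_min hz.1 (sq_nonneg _)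
    simp only [Pi.zero_apply]; linarith [hz.2]
  obtain ⟨hD0, hD1⟩ := genBd (m := m2) (ζl := fun z => z.2) (ζc := fun z => z.1)
    measurable_snd measurable_fst hae hIm2 hx hy
  have hcomm : (fun z : ℝ × ℝ => exp (-(y * z.1 + x * z.2)) - 1 + (y * z.1 + x * z.2))
      = (fun z : ℝ × ℝ => exp (-(x * z.2 + y * z.1)) - 1 + (x * z.2 + y * z.1)) := by
    funext z; rw [add_comm (y * z.1) (x * z.2)]
  have hDup : (∫ z, (exp (-(y * z.1 + x * z.2)) - 1 + (y * z.1 + x * z.2)) ∂m2)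
      ≤ (2*M + M^2 + 1) * ∫ z, (min z.2 (z.2 ^ 2) + z.1) ∂m2 := by
    rw [hcomm]
    calc _ ≤ (x + x^2 + y + 1) * ∫ z, (min z.2 (z.2 ^ 2) + z.1) ∂m2 := hD1
    _ ≤ _ := by apply mul_le_mul_of_nonneg_right (by nlinarith) hIm0
  have hD0' : 0 ≤ ∫ z, (exp (-(y * z.1 + x * z.2)) - 1 + (y * z.1 + x * z.2)) ∂m2 := by
    rw [hcomm]; exact hD0
  simp only [phi2]
  rw [abs_le]
  constructor
  · nlinarith [mul_nonneg hc2 (sq_nonneg x), mul_nonneg (by nlinarith : (0:ℝ) ≤ 2*M + M^2 + 1) hIm0,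
      mul_le_mul_of_nonneg_right (neg_abs_le (b 1 0)) hy,
      mul_le_mul_of_nonneg_right (neg_abs_le (b 1 1)) hx,
      mul_le_mul_of_nonneg_left hxM (abs_nonneg (b 1 1)),
      mul_le_mul_of_nonneg_left hyM (abs_nonneg (b 1 0))]
  · nlinarith [mul_le_mul_of_nonneg_right (le_abs_self (b 1 0)) hy,
      mul_le_mul_of_nonneg_right (le_abs_self (b 1 1)) hx,
      mul_le_mul_of_nonneg_left hxM (abs_nonneg (b 1 1)),
      mul_le_mul_of_nonneg_left hyM (abs_nonneg (b 1 0)),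
      mul_le_mul_of_nonneg_left (by nlinarith : x^2 ≤ M^2) hc2]
end PhiBd

section Meas
lemma phi1_meas (b : Matrix (Fin 2) (Fin 2) ℝ) (c1 : ℝ) (m1 : Measure (ℝ × ℝ))
    [SigmaFinite m1] : Measurable (phi1 b c1 m1) := by
  have hf : Continuous (fun p : (ℝ×ℝ)×(ℝ×ℝ) =>
      exp (-(p.1.1*p.2.1 + p.1.2*p.2.2)) - 1 + (p.1.1*p.2.1 + p.1.2*p.2.2)) := by fun_prop
  have hI := hf.stronglyMeasurable.integral_prod_right' (ν := m1)
  have h1 : Measurable (fun l : ℝ×ℝ => b 0 0 * l.1 + b 0 1 * l.2 + c1 * l.1 ^ 2) := by fun_prop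
  exact h1.add hI.measurable

lemma phi2_meas (b : Matrix (Fin 2) (Fin 2) ℝ) (c2 : ℝ) (m2 : Measure (ℝ × ℝ))
    [SigmaFinite m2] : Measurable (phi2 b c2 m2) := by
  have hf : Continuous (fun p : (ℝ×ℝ)×(ℝ×ℝ) =>
      exp (-(p.1.1*p.2.1 + p.1.2*p.2.2)) - 1 + (p.1.1*p.2.1 + p.1.2*p.2.2)) := by fun_prop
  have hI := hf.stronglyMeasurable.integral_prod_right' (ν := m2)
  have h1 : Measurable (fun l : ℝ×ℝ => b 1 0 * l.1 + b 1 1 * l.2 + c2 * l.2 ^ 2) := by fun_prop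
  exact h1.add hI.measurable

lemma phi0_meas (a0 c0 : ℝ) (m0 : Measure ℝ) [SigmaFinite m0] :
    Measurable (phi0 a0 c0 m0) := by
  have hf : Continuous (fun p : ℝ × ℝ => exp (-(p.1*p.2)) - 1 + p.1*p.2) := by fun_prop
  have hI := hf.stronglyMeasurable.integral_prod_right' (ν := m0)
  have h1 : Measurable (fun x : ℝ => a0 * x + c0 * x ^ 2) := by fun_prop
  exact h1.add hI.measurable
end Meas
/-- If the scalar branching mechanism `φ⁰` is dominated by both local projections `φ*₁`
and `φ*₂` of the two-type branching mechanism `φ`, then any continuous quadrant-valued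
solution `u` of the two-type backward equation with terminal value `λ` is dominated,
componentwise, by the continuous nonnegative solution `w` of the scalar backward equation
with terminal value `max(λ1, λ2)`. -/
theorem stmt14 (b : Matrix (Fin 2) (Fin 2) ℝ) (c1 c2 : ℝ) (hc1 : 0 ≤ c1) (hc2 : 0 ≤ c2)
    (m1 m2 : Measure (ℝ × ℝ)) [SigmaFinite m1] [SigmaFinite m2]
    (hsupp1 : m1 quadrantᶜ = 0) (hzero1 : m1 {0} = 0)
    (hsupp2 : m2 quadrantᶜ = 0) (hzero2 : m2 {0} = 0)
    (hmom1 : ∫⁻ z, ENNReal.ofReal (min z.1 (z.1 ^ 2) + z.2) ∂m1 < ⊤)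
    (hmom2 : ∫⁻ z, ENNReal.ofReal (min z.2 (z.2 ^ 2) + z.1) ∂m2 < ⊤)
    (hadm1 : b 0 1 + ∫ z, z.2 ∂m1 ≤ 0)
    (hadm2 : b 1 0 + ∫ z, z.1 ∂m2 ≤ 0)
    (a0 c0 : ℝ) (hc0 : 0 ≤ c0)
    (m0 : Measure ℝ) [SigmaFinite m0]
    (hsupp0 : m0 (Set.Iic 0) = 0)
    (hmom0 : ∫⁻ u, ENNReal.ofReal (min u (u ^ 2)) ∂m0 < ⊤)
    (hdom1 : ∀ x : ℝ, 0 ≤ x → phi0 a0 c0 m0 x ≤ phiStar1 b c1 m1 x)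
    (hdom2 : ∀ x : ℝ, 0 ≤ x → phi0 a0 c0 m0 x ≤ phiStar2 b c2 m2 x)
    (t r0 : ℝ) (hr0 : r0 ≤ t)
    (ξ : ℝ → ℝ) (hξmeas : Measurable ξ)
    (hξbdd : ∃ C : ℝ, ∀ s ∈ Set.Icc r0 t, |ξ s| ≤ C)
    (lam : ℝ × ℝ) (hlam : lam ∈ quadrant)
    (u : ℝ → ℝ × ℝ) (w : ℝ → ℝ)
    (hucont : ContinuousOn u (Set.Icc r0 t))
    (hwcont : ContinuousOn w (Set.Icc r0 t))
    (huquad : ∀ r ∈ Set.Icc r0 t, u r ∈ quadrant)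
    (hwpos : ∀ r ∈ Set.Icc r0 t, 0 ≤ w r)
    (hueq1 : ∀ r ∈ Set.Icc r0 t,
      (u r).1 = lam.1 - ∫ s in r..t,
        Real.exp (ξ s) * phi1 b c1 m1 (Real.exp (-ξ s) • u s))
    (hueq2 : ∀ r ∈ Set.Icc r0 t,
      (u r).2 = lam.2 - ∫ s in r..t,
        Real.exp (ξ s) * phi2 b c2 m2 (Real.exp (-ξ s) • u s))
    (hweq : ∀ r ∈ Set.Icc r0 t,
      w r = max lam.1 lam.2 - ∫ s in r..t,
        Real.exp (ξ s) * phi0 a0 c0 m0 (Real.exp (-ξ s) * w s)) :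
    ∀ r ∈ Set.Icc r0 t, (u r).1 ≤ w r ∧ (u r).2 ≤ w r := by
  classical
  -- integrability of moment functions
  have hIm1 := mom_integrable1 hsupp1 hmom1
  have hIm2 := mom_integrable2 hsupp2 hmom2
  have hIm0 := mom_integrable0 hsupp0 hmom0
  have hae0 := ae_pos0 hsupp0
  have hIm0v : 0 ≤ ∫ x, min x (x^2) ∂m0 := by
    apply integral_nonneg_of_ae
    filter_upwards [hae0] with x hx
    exact le_min hx (sq_nonneg _)
  -- bounds on ξ
  obtain ⟨Cx, hCx⟩ := hξbdd
  set E := Real.exp Cx with hEdef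
  have hE0 : 0 < E := Real.exp_pos _
  have hxiBd : ∀ s ∈ Set.Icc r0 t, Real.exp (-ξ s) ≤ E ∧ Real.exp (ξ s) ≤ E := by
    intro s hs
    have := abs_le.mp (hCx s hs)
    exact ⟨Real.exp_le_exp.mpr (by linarith), Real.exp_le_exp.mpr (by linarith)⟩
  have hmulinv : ∀ s : ℝ, Real.exp (ξ s) * Real.exp (-ξ s) = 1 := by
    intro s; rw [← Real.exp_add]; simp
  -- bound on u and w
  obtain ⟨Mu, hMu⟩ := isCompact_Icc.exists_bound_of_continuousOn hucont
  obtain ⟨Mw, hMw⟩ := isCompact_Icc.exists_bound_of_continuousOn hwcont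
  set Mb : ℝ := max (max Mu Mw) 0 with hMbdef
  have hMb0 : 0 ≤ Mb := le_max_right _ _
  have hubd : ∀ s ∈ Set.Icc r0 t, (u s).1 ≤ Mb ∧ (u s).2 ≤ Mb ∧ w s ≤ Mb := by
    intro s hs
    have h1 : (u s).1 ≤ ‖u s‖ := le_trans (le_abs_self _) (norm_fst_le (u s))
    have h2 : (u s).2 ≤ ‖u s‖ := le_trans (le_abs_self _) (norm_snd_le (u s))
    have h3 : w s ≤ |w s| := le_abs_self _
    have h4 := hMu s hs
    have h5 := hMw s hs
    have hMuMb : Mu ≤ Mb := le_max_of_le_left (le_max_left _ _)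
    have hMwMb : Mw ≤ Mb := le_max_of_le_left (le_max_right _ _)
    rw [Real.norm_eq_abs] at h5
    exact ⟨by linarith, by linarith, by linarith⟩
  set M' : ℝ := E * Mb with hM'def
  have hM'0 : 0 ≤ M' := mul_nonneg hE0.le hMb0
  -- scaled values lie in [0, M']
  have hscaled : ∀ s ∈ Set.Icc r0 t, ∀ a : ℝ, 0 ≤ a → a ≤ Mb →
      0 ≤ Real.exp (-ξ s) * a ∧ Real.exp (-ξ s) * a ≤ M' := by
    intro s hs a ha haM
    constructor
    · positivity
    · exact mul_le_mul (hxiBd s hs).1 haM ha hE0.le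
  -- the three integrands
  set F1 : ℝ → ℝ := fun s => Real.exp (ξ s) * phi1 b c1 m1 (Real.exp (-ξ s) • u s) with hF1def
  set F2 : ℝ → ℝ := fun s => Real.exp (ξ s) * phi2 b c2 m2 (Real.exp (-ξ s) • u s) with hF2def
  set F0 : ℝ → ℝ := fun s => Real.exp (ξ s) * phi0 a0 c0 m0 (Real.exp (-ξ s) * w s) with hF0def
  have hpair : ∀ s : ℝ, Real.exp (-ξ s) • u s
      = (Real.exp (-ξ s) * (u s).1, Real.exp (-ξ s) * (u s).2) := by
    intro s
    ext <;> simp [Prod.smul_fst, Prod.smul_snd, smul_eq_mul]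
  -- difference functions
  set d1 : ℝ → ℝ := fun r => (u r).1 - w r with hd1def
  set d2 : ℝ → ℝ := fun r => (u r).2 - w r with hd2def
  set g : ℝ → ℝ := fun r => max (max (d1 r) (d2 r)) 0 with hgdef
  have hg0 : ∀ r, 0 ≤ g r := fun r => le_max_right _ _
  have hd1g : ∀ r, d1 r ≤ g r := fun r => le_trans (le_max_left _ _) (le_max_left _ _)
  have hd2g : ∀ r, d2 r ≤ g r := fun r => le_trans (le_max_right _ _) (le_max_left _ _)
  have hgbd : ∀ r ∈ Set.Icc r0 t, g r ≤ Mb := by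
    intro r hr
    obtain ⟨hb1, hb2, hb3⟩ := hubd r hr
    have hw := hwpos r hr
    have hA : d1 r ≤ Mb := by simp only [hd1def]; linarith
    have hB : d2 r ≤ Mb := by simp only [hd2def]; linarith
    exact max_le (max_le hA hB) hMb0
  -- continuity
  have hu1cont : ContinuousOn (fun r => (u r).1) (Set.Icc r0 t) :=
    continuous_fst.comp_continuousOn hucont
  have hu2cont : ContinuousOn (fun r => (u r).2) (Set.Icc r0 t) :=
    continuous_snd.comp_continuousOn hucont
  have hd1cont : ContinuousOn d1 (Set.Icc r0 t) := hu1cont.sub hwcont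
  have hd2cont : ContinuousOn d2 (Set.Icc r0 t) := hu2cont.sub hwcont
  have hgcont : ContinuousOn g (Set.Icc r0 t) :=
    fun x hx => ((hd1cont x hx).max (hd2cont x hx)).max continuousWithinAt_const
  -- constants
  set Im0v : ℝ := ∫ x, min x (x^2) ∂m0 with hIm0vdef
  set L0 : ℝ := |a0| + 2*c0*M' + (1 + M') * Im0v with hL0def
  have hL00 : 0 ≤ L0 := by
    have h1 : 0 ≤ (1 + M') * Im0v := mul_nonneg (by linarith) hIm0v
    have h2 : 0 ≤ 2*c0*M' := by positivity
    have h3 := abs_nonneg a0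
    simp only [hL0def]; linarith
  set C : ℝ := L0 + |b 0 1| + |b 1 0| with hCdef
  have hC0 : 0 ≤ C := by
    have := abs_nonneg (b 0 1); have := abs_nonneg (b 1 0)
    simp only [hCdef]; linarith
  -- interval integrability of F1, F2, F0
  have mkInt : ∀ (F : ℝ → ℝ) (B : ℝ), AEMeasurable F (volume.restrict (Set.Icc r0 t)) →
      (∀ s ∈ Set.Icc r0 t, ‖F s‖ ≤ B) → IntervalIntegrable F volume r0 t := by
    intro F B hmeas hbd
    apply IntegrableOn.intervalIntegrable
    rw [Set.uIcc_of_le hr0]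
    apply Integrable.mono' (integrable_const B) hmeas.aestronglyMeasurable
    rw [ae_restrict_iff' measurableSet_Icc]
    exact ae_of_all _ hbd
  have hargmeas : AEMeasurable (fun s => Real.exp (-ξ s) • u s)
      (volume.restrict (Set.Icc r0 t)) := by
    have h1 : Measurable (fun s => Real.exp (-ξ s)) := Real.measurable_exp.comp hξmeas.neg
    exact (h1.aemeasurable).smul (hucont.aemeasurable measurableSet_Icc)
  have hwargmeas : AEMeasurable (fun s => Real.exp (-ξ s) * w s)
      (volume.restrict (Set.Icc r0 t)) := by
    have h1 : Measurable (fun s => Real.exp (-ξ s)) := Real.measurable_exp.comp hξmeas.neg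
    exact (h1.aemeasurable).mul (hwcont.aemeasurable measurableSet_Icc)
  have hexpmeas : Measurable (fun s => Real.exp (ξ s)) := Real.measurable_exp.comp hξmeas
  have hF1meas : AEMeasurable F1 (volume.restrict (Set.Icc r0 t)) :=
    hexpmeas.aemeasurable.mul ((phi1_meas b c1 m1).comp_aemeasurable hargmeas)
  have hF2meas : AEMeasurable F2 (volume.restrict (Set.Icc r0 t)) :=
    hexpmeas.aemeasurable.mul ((phi2_meas b c2 m2).comp_aemeasurable hargmeas)
  have hF0meas : AEMeasurable F0 (volume.restrict (Set.Icc r0 t)) :=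
    hexpmeas.aemeasurable.mul ((phi0_meas a0 c0 m0).comp_aemeasurable hwargmeas)
  -- pointwise bounds on |F_i|
  set I1v : ℝ := ∫ z, (min z.1 (z.1 ^ 2) + z.2) ∂m1 with hI1vdef
  set I2v : ℝ := ∫ z, (min z.2 (z.2 ^ 2) + z.1) ∂m2 with hI2vdef
  set B1 : ℝ := E * ((|b 0 0| + |b 0 1|) * M' + c1 * M'^2 + (2*M' + M'^2 + 1) * I1v) with hB1def
  set B2 : ℝ := E * ((|b 1 0| + |b 1 1|) * M' + c2 * M'^2 + (2*M' + M'^2 + 1) * I2v) with hB2def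
  set B0 : ℝ := E * (|a0| * M' + c0 * M'^2 + (M' + M'^2) * Im0v) with hB0def
  have hF1bd : ∀ s ∈ Set.Icc r0 t, ‖F1 s‖ ≤ B1 := by
    intro s hs
    obtain ⟨hq1, hq2⟩ := huquad s hs
    obtain ⟨hb1, hb2, _⟩ := hubd s hs
    obtain ⟨hx0, hxM⟩ := hscaled s hs _ hq1 hb1
    obtain ⟨hy0, hyM⟩ := hscaled s hs _ hq2 hb2
    have hphi := phi1_bd b c1 hc1 m1 hsupp1 hIm1 hx0 hy0 hxM hyM
    simp only [hF1def, Real.norm_eq_abs, abs_mul, Real.abs_exp, hpair s]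
    exact mul_le_mul (hxiBd s hs).2 hphi (abs_nonneg _) hE0.le
  have hF2bd : ∀ s ∈ Set.Icc r0 t, ‖F2 s‖ ≤ B2 := by
    intro s hs
    obtain ⟨hq1, hq2⟩ := huquad s hs
    obtain ⟨hb1, hb2, _⟩ := hubd s hs
    obtain ⟨hx0, hxM⟩ := hscaled s hs _ hq2 hb2
    obtain ⟨hy0, hyM⟩ := hscaled s hs _ hq1 hb1
    have hphi := phi2_bd b c2 hc2 m2 hsupp2 hIm2 hx0 hy0 hxM hyM
    simp only [hF2def, Real.norm_eq_abs, abs_mul, Real.abs_exp, hpair s]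
    exact mul_le_mul (hxiBd s hs).2 hphi (abs_nonneg _) hE0.le
  have hF0bd : ∀ s ∈ Set.Icc r0 t, ‖F0 s‖ ≤ B0 := by
    intro s hs
    obtain ⟨hv0, hvM⟩ := hscaled s hs _ (hwpos s hs) (hubd s hs).2.2
    have hphi := phi0_bd a0 c0 hc0 hIm0 hae0 hv0 hvM
    simp only [hF0def, Real.norm_eq_abs, abs_mul, Real.abs_exp]
    exact mul_le_mul (hxiBd s hs).2 hphi (abs_nonneg _) hE0.le
  have hF1int : IntervalIntegrable F1 volume r0 t := mkInt F1 B1 hF1meas hF1bd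
  have hF2int : IntervalIntegrable F2 volume r0 t := mkInt F2 B2 hF2meas hF2bd
  have hF0int : IntervalIntegrable F0 volume r0 t := mkInt F0 B0 hF0meas hF0bd
  have hsubII : ∀ (F : ℝ → ℝ), IntervalIntegrable F volume r0 t →
      ∀ a' ∈ Set.Icc r0 t, ∀ b' ∈ Set.Icc r0 t, IntervalIntegrable F volume a' b' := by
    intro F hF a' ha' b' hb'
    apply hF.mono_set
    exact Set.uIcc_subset_uIcc (by rw [Set.uIcc_of_le hr0]; exact ha')
      (by rw [Set.uIcc_of_le hr0]; exact hb')
  have hgint : ∀ a' ∈ Set.Icc r0 t, ∀ b' ∈ Set.Icc r0 t,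
      IntervalIntegrable (fun s => C * g s) volume a' b' := by
    intro a' ha' b' hb'
    apply ContinuousOn.intervalIntegrable
    apply (continuousOn_const.mul hgcont).mono
    exact (Set.uIcc_subset_uIcc (by rw [Set.uIcc_of_le hr0]; exact ha')
      (by rw [Set.uIcc_of_le hr0]; exact hb')).trans (Set.uIcc_of_le hr0).subset
  -- terminal values
  have htI : t ∈ Set.Icc r0 t := ⟨hr0, le_refl t⟩
  -- pointwise comparison for component 1
  have hptw1 : ∀ s ∈ Set.Icc r0 t, 0 ≤ d1 s → F0 s - F1 s ≤ C * g s := by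
    intro s hs hd
    obtain ⟨hq1, hq2⟩ := huquad s hs
    obtain ⟨hb1, hb2, hb3⟩ := hubd s hs
    obtain ⟨hx0, hxM⟩ := hscaled s hs _ hq1 hb1
    obtain ⟨hy0, hyM⟩ := hscaled s hs _ hq2 hb2
    obtain ⟨hv0, hvM⟩ := hscaled s hs _ (hwpos s hs) hb3
    set es := Real.exp (-ξ s) with hesdef
    set ee := Real.exp (ξ s) with heedef
    have hes0 : (0:ℝ) ≤ es := (Real.exp_pos _).le
    have hee0 : (0:ℝ) ≤ ee := (Real.exp_pos _).le
    set x := es * (u s).1 with hxdef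
    set y := es * (u s).2 with hydef
    set v := es * w s with hvdef
    have h1 := phi1_ge b c1 m1 hsupp1 hIm1 hadm1 hx0 hy0
    have h2 := hdom1 x hx0
    have h3' := phi0_lip a0 c0 hc0 hIm0 hae0 hv0 hx0 hvM hxM
    have h3 : -(L0 * |x - v|) ≤ phi0 a0 c0 m0 x - phi0 a0 c0 m0 v := by
      rw [hL0def, hIm0vdef]; exact h3'
    have h5 : ee * (phi0 a0 c0 m0 v - L0 * |x - v| - |b 0 1| * max (y - x) 0)
        ≤ ee * phi1 b c1 m1 (x, y) := mul_le_mul_of_nonneg_left (by linarith) hee0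
    rw [mul_sub, mul_sub] at h5
    have hF1s : F1 s = ee * phi1 b c1 m1 (x, y) := by
      simp only [hF1def, hpair s, hxdef, hydef]
      rfl
    have hF0s : F0 s = ee * phi0 a0 c0 m0 v := rfl
    have r1 : ee * |x - v| = d1 s := by
      have hxv : x - v = es * d1 s := by simp only [hxdef, hvdef, hd1def]; ring
      rw [hxv, abs_of_nonneg (mul_nonneg hes0 hd), ← mul_assoc, hmulinv s, one_mul]
    have r2 : ee * max (y - x) 0 = max (d2 s - d1 s) 0 := by
      have hyx : y - x = es * (d2 s - d1 s) := by
        simp only [hxdef, hydef, hd1def, hd2def]; ring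
      rw [hyx, mul_max_of_nonneg _ _ hee0, mul_zero, ← mul_assoc, hmulinv s, one_mul]
    have r3 : max (d2 s - d1 s) 0 ≤ g s := max_le (by linarith [hd2g s]) (hg0 s)
    have hd1gs := hd1g s
    have hfin1 : ee * (L0 * |x - v|) = L0 * d1 s := by rw [← r1]; ring
    have hfin2 : ee * (|b 0 1| * max (y - x) 0) = |b 0 1| * max (d2 s - d1 s) 0 := by
      rw [← r2]; ring
    have t1 : L0 * d1 s ≤ L0 * g s := mul_le_mul_of_nonneg_left hd1gs hL00
    have t2 : |b 0 1| * max (d2 s - d1 s) 0 ≤ |b 0 1| * g s :=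
      mul_le_mul_of_nonneg_left r3 (abs_nonneg _)
    have t3 : 0 ≤ |b 1 0| * g s := mul_nonneg (abs_nonneg _) (hg0 s)
    have hCexp : C * g s = L0 * g s + |b 0 1| * g s + |b 1 0| * g s := by
      rw [hCdef]; ring
    rw [hF1s, hF0s, hCexp]
    linarith [h5, hfin1, hfin2]
  -- pointwise comparison for component 2
  have hptw2 : ∀ s ∈ Set.Icc r0 t, 0 ≤ d2 s → F0 s - F2 s ≤ C * g s := by
    intro s hs hd
    obtain ⟨hq1, hq2⟩ := huquad s hs
    obtain ⟨hb1, hb2, hb3⟩ := hubd s hs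
    obtain ⟨hx0, hxM⟩ := hscaled s hs _ hq2 hb2
    obtain ⟨hy0, hyM⟩ := hscaled s hs _ hq1 hb1
    obtain ⟨hv0, hvM⟩ := hscaled s hs _ (hwpos s hs) hb3
    set es := Real.exp (-ξ s) with hesdef
    set ee := Real.exp (ξ s) with heedef
    have hes0 : (0:ℝ) ≤ es := (Real.exp_pos _).le
    have hee0 : (0:ℝ) ≤ ee := (Real.exp_pos _).le
    set x := es * (u s).2 with hxdef
    set y := es * (u s).1 with hydef
    set v := es * w s with hvdef
    have h1 := phi2_ge b c2 m2 hsupp2 hIm2 hadm2 hx0 hy0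
    have h2 := hdom2 x hx0
    have h3' := phi0_lip a0 c0 hc0 hIm0 hae0 hv0 hx0 hvM hxM
    have h3 : -(L0 * |x - v|) ≤ phi0 a0 c0 m0 x - phi0 a0 c0 m0 v := by
      rw [hL0def, hIm0vdef]; exact h3'
    have h5 : ee * (phi0 a0 c0 m0 v - L0 * |x - v| - |b 1 0| * max (y - x) 0)
        ≤ ee * phi2 b c2 m2 (y, x) := mul_le_mul_of_nonneg_left (by linarith) hee0
    rw [mul_sub, mul_sub] at h5
    have hF2s : F2 s = ee * phi2 b c2 m2 (y, x) := by
      simp only [hF2def, hpair s, hxdef, hydef]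
      rfl
    have hF0s : F0 s = ee * phi0 a0 c0 m0 v := rfl
    have r1 : ee * |x - v| = d2 s := by
      have hxv : x - v = es * d2 s := by simp only [hxdef, hvdef, hd2def]; ring
      rw [hxv, abs_of_nonneg (mul_nonneg hes0 hd), ← mul_assoc, hmulinv s, one_mul]
    have r2 : ee * max (y - x) 0 = max (d1 s - d2 s) 0 := by
      have hyx : y - x = es * (d1 s - d2 s) := by
        simp only [hxdef, hydef, hd1def, hd2def]; ring
      rw [hyx, mul_max_of_nonneg _ _ hee0, mul_zero, ← mul_assoc, hmulinv s, one_mul]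
    have r3 : max (d1 s - d2 s) 0 ≤ g s := max_le (by linarith [hd1g s]) (hg0 s)
    have hd2gs := hd2g s
    have hfin1 : ee * (L0 * |x - v|) = L0 * d2 s := by rw [← r1]; ring
    have hfin2 : ee * (|b 1 0| * max (y - x) 0) = |b 1 0| * max (d1 s - d2 s) 0 := by
      rw [← r2]; ring
    have t1 : L0 * d2 s ≤ L0 * g s := mul_le_mul_of_nonneg_left hd2gs hL00
    have t2 : |b 1 0| * max (d1 s - d2 s) 0 ≤ |b 1 0| * g s :=
      mul_le_mul_of_nonneg_left r3 (abs_nonneg _)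
    have t3 : 0 ≤ |b 0 1| * g s := mul_nonneg (abs_nonneg _) (hg0 s)
    have hCexp : C * g s = L0 * g s + |b 1 0| * g s + |b 0 1| * g s := by
      rw [hCdef]; ring
    rw [hF2s, hF0s, hCexp]
    linarith [h5, hfin1, hfin2]
  -- generic stopping-time comparison
  have hcomp : ∀ (F : ℝ → ℝ) (d : ℝ → ℝ), IntervalIntegrable F volume r0 t →
      (∀ s ∈ Set.Icc r0 t, 0 ≤ d s → F0 s - F s ≤ C * g s) →
      ContinuousOn d (Set.Icc r0 t) →
      ∀ A : ℝ, A ≤ 0 →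
      (∀ r' ∈ Set.Icc r0 t, d r' = A - ((∫ s in r'..t, F s) - ∫ s in r'..t, F0 s)) →
      ∀ r ∈ Set.Icc r0 t, d r ≤ ∫ s in r..t, C * g s := by
    intro F d hFint hptw hdcont A hA heq r hr
    by_cases hd : d r ≤ 0
    · exact le_trans hd (intervalIntegral.integral_nonneg hr.2
        (fun s _ => mul_nonneg hC0 (hg0 s)))
    push_neg at hd
    set S := {s : ℝ | s ∈ Set.Icc r t ∧ d s ≤ 0} with hSdef
    have hSsub : Set.Icc r t ⊆ Set.Icc r0 t := Set.Icc_subset_Icc hr.1 (le_refl t)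
    have hdt : d t = A := by
      rw [heq t htI]; simp [intervalIntegral.integral_same]
    have hSne : S.Nonempty := ⟨t, ⟨hr.2, le_refl t⟩, by rw [hdt]; exact hA⟩
    have hSclosed : IsClosed S := by
      have hSeq : S = Set.Icc r t ∩ d ⁻¹' (Set.Iic 0) := by
        ext s; simp [hSdef, Set.mem_Icc]
      rw [hSeq]
      exact (hdcont.mono hSsub).preimage_isClosed_of_isClosed isClosed_Icc isClosed_Iic
    have hSbdd : BddBelow S := ⟨r, fun s hs => hs.1.1⟩
    set ρ := sInf S with hρdef
    have hρS : ρ ∈ S := hSclosed.csInf_mem hSne hSbdd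
    have hrρ : r ≤ ρ := hρS.1.1
    have hρt : ρ ≤ t := hρS.1.2
    have hρI : ρ ∈ Set.Icc r0 t := ⟨le_trans hr.1 hrρ, hρt⟩
    have hdρ : d ρ ≤ 0 := hρS.2
    have hpos : ∀ s ∈ Set.Ico r ρ, 0 ≤ d s := by
      intro s hs
      by_contra hneg
      push_neg at hneg
      have hsS : s ∈ S := ⟨⟨hs.1, le_trans hs.2.le hρt⟩, hneg.le⟩
      have := csInf_le hSbdd hsS
      rw [← hρdef] at this
      linarith [hs.2]
    have hFrρ := hsubII F hFint r hr ρ hρI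
    have hF0rρ := hsubII F0 hF0int r hr ρ hρI
    have hFρt := hsubII F hFint ρ hρI t htI
    have hF0ρt := hsubII F0 hF0int ρ hρI t htI
    have hsplitF : (∫ s in r..ρ, F s) + (∫ s in ρ..t, F s) = ∫ s in r..t, F s :=
      intervalIntegral.integral_add_adjacent_intervals hFrρ hFρt
    have hsplitF0 : (∫ s in r..ρ, F0 s) + (∫ s in ρ..t, F0 s) = ∫ s in r..t, F0 s :=
      intervalIntegral.integral_add_adjacent_intervals hF0rρ hF0ρt
    have heqr := heq r hr
    have heqρ := heq ρ hρI
    have hdr : d r = d ρ + ((∫ s in r..ρ, F0 s) - (∫ s in r..ρ, F s)) := by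
      rw [heqr, heqρ]; linarith [hsplitF, hsplitF0]
    have hmono : (∫ s in r..ρ, F0 s) - (∫ s in r..ρ, F s) ≤ ∫ s in r..ρ, C * g s := by
      rw [← intervalIntegral.integral_sub hF0rρ hFrρ]
      apply intervalIntegral.integral_mono_ae_restrict hrρ (hF0rρ.sub hFrρ) (hgint r hr ρ hρI)
      have hIcoIcc : volume.restrict (Set.Icc r ρ) = volume.restrict (Set.Ico r ρ) :=
        (Measure.restrict_congr_set MeasureTheory.Ico_ae_eq_Icc).symm
      have hh : ∀ᵐ s ∂(volume.restrict (Set.Icc r ρ)),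
          (fun s => F0 s - F s) s ≤ (fun s => C * g s) s := by
        rw [hIcoIcc, ae_restrict_iff' measurableSet_Ico]
        apply ae_of_all
        intro s hs
        exact hptw s ⟨le_trans hr.1 hs.1, le_trans hs.2.le hρt⟩ (hpos s hs)
      exact hh
    have hsplitg : (∫ s in r..ρ, C * g s) + (∫ s in ρ..t, C * g s) = ∫ s in r..t, C * g s :=
      intervalIntegral.integral_add_adjacent_intervals (hgint r hr ρ hρI) (hgint ρ hρI t htI)
    have htail : 0 ≤ ∫ s in ρ..t, C * g s :=
      intervalIntegral.integral_nonneg hρt (fun s _ => mul_nonneg hC0 (hg0 s))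
    linarith
  have hΛ : lam.1 - max lam.1 lam.2 ≤ 0 ∧ lam.2 - max lam.1 lam.2 ≤ 0 :=
    ⟨by linarith [le_max_left lam.1 lam.2], by linarith [le_max_right lam.1 lam.2]⟩
  have hk1 : ∀ r ∈ Set.Icc r0 t, d1 r ≤ ∫ s in r..t, C * g s := by
    apply hcomp F1 d1 hF1int hptw1 hd1cont (lam.1 - max lam.1 lam.2) hΛ.1
    intro r' hr'
    simp only [hd1def]
    rw [hueq1 r' hr', hweq r' hr']; ring
  have hk2 : ∀ r ∈ Set.Icc r0 t, d2 r ≤ ∫ s in r..t, C * g s := by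
    apply hcomp F2 d2 hF2int hptw2 hd2cont (lam.2 - max lam.1 lam.2) hΛ.2
    intro r' hr'
    simp only [hd2def]
    rw [hueq2 r' hr', hweq r' hr']; ring
  have hkey : ∀ r ∈ Set.Icc r0 t, g r ≤ ∫ s in r..t, C * g s := by
    intro r hr
    exact max_le (max_le (hk1 r hr) (hk2 r hr))
      (intervalIntegral.integral_nonneg hr.2 (fun s _ => mul_nonneg hC0 (hg0 s)))
  -- Gronwall iteration
  have hiter : ∀ n : ℕ, ∀ r ∈ Set.Icc r0 t, g r ≤ Mb * (C^n * (t - r)^n / n.factorial) := by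
    intro n
    induction n with
    | zero => intro r hr; simpa using hgbd r hr
    | succ n ih =>
      intro r hr
      have h1 := hkey r hr
      have h2 : (∫ s in r..t, C * g s)
          ≤ ∫ s in r..t, C * (Mb * (C^n * (t - s)^n / n.factorial)) := by
        apply intervalIntegral.integral_mono_on hr.2 (hgint r hr t htI)
        · apply ContinuousOn.intervalIntegrable
          apply Continuous.continuousOn
          fun_prop
        · intro s hs
          exact mul_le_mul_of_nonneg_left (ih s ⟨le_trans hr.1 hs.1, hs.2⟩) hC0
      have h3 : (∫ s in r..t, C * (Mb * (C^n * (t - s)^n / n.factorial)))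
          = (C * (Mb * (C^n / n.factorial))) * ∫ s in r..t, (t - s)^n := by
        rw [← intervalIntegral.integral_const_mul]
        apply intervalIntegral.integral_congr
        intro s _
        ring
      have h4 : (∫ s in r..t, (t - s)^n) = (t - r)^(n+1)/(n+1) := by
        rw [intervalIntegral.integral_comp_sub_left (fun x => x^n) t]
        simp [integral_pow]
      have hfac : (0:ℝ) < n.factorial := by positivity
      have h5 : C * (Mb * (C^n / n.factorial)) * ((t - r)^(n+1)/(n+1))
          = Mb * (C^(n+1) * (t - r)^(n+1) / (n+1).factorial) := by
        rw [Nat.factorial_succ]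
        push_cast
        field_simp
        ring
      calc g r ≤ ∫ s in r..t, C * g s := h1
      _ ≤ ∫ s in r..t, C * (Mb * (C^n * (t - s)^n / n.factorial)) := h2
      _ = C * (Mb * (C^n / n.factorial)) * ((t - r)^(n+1)/(n+1)) := by rw [h3, h4]
      _ = Mb * (C^(n+1) * (t - r)^(n+1) / (n+1).factorial) := h5
  -- conclusion
  intro r hr
  have hlim : Filter.Tendsto (fun n : ℕ => Mb * (C^n * (t - r)^n / n.factorial))
      Filter.atTop (nhds 0) := by
    have h := FloorSemiring.tendsto_pow_div_factorial_atTop (C * (t - r))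
    have heqf : (fun n : ℕ => Mb * (C^n * (t - r)^n / n.factorial))
        = fun n : ℕ => Mb * ((C * (t - r))^n / n.factorial) := by
      funext n; rw [mul_pow]
    rw [heqf]
    simpa using h.const_mul Mb
  have hg_le : g r ≤ 0 := ge_of_tendsto' hlim (fun n => hiter n r hr)
  have h1 := hd1g r
  have h2 := hd2g r
  simp only [hd1def, hd2def] at h1 h2
  exact ⟨by linarith, by linarith⟩
end

section
/- Let b = (b_ij) be a real 2×2 matrix, c1, c2 ≥ 0, and m1, m2 σ-finite measures on ℝ₊² supported by ℝ₊² \ {0} with ∫(z1 ∧ z1² + z2) m1(dz) + ∫(z2 ∧ z2² + z1) m2(dz) < ∞, satisfying b12 + ∫ z2 m1(dz) ≤ 0 and b21 + ∫ z1 m2(dz) ≤ 0. Define φ = (φ1, φ2) by φ1(λ) = b11 λ1 + b12 λ2 + c1 λ1² + ∫(e^{−⟨λ,z⟩} − 1 + ⟨λ,z⟩) m1(dz), φ2(λ) = b21 λ1 + b22 λ2 + c2 λ2² + ∫(e^{−⟨λ,z⟩} − 1 + ⟨λ,z⟩) m2(dz). Let r0 ≤ t, let ξ : [r0, t] → ℝ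 be measurable and bounded, and let λ, λ' ∈ ℝ₊² with λ1 ≤ λ'1 and λ2 ≤ λ'2. If u, u' : [r0, t] → ℝ₊² are continuous and satisfy u^{(i)}(r) = λ_i − ∫_r^t e^{ξ(s)} φ_i(e^{−ξ(s)} u(s)) ds and u'^{(i)}(r) = λ'_i − ∫_r^t e^{ξ(s)} φ_i(e^{−ξ(s)} u'(s)) ds for i = 1, 2 and all r ∈ [r0, t], then u^{(i)}(r) ≤ u'^{(i)}(r) for i = 1, 2 and all r ∈ [r0, t] (monotonicity of the cumulant semigroup in its terminal value). -/
open MeasureTheory Real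

noncomputable def Jint (m : Measure (ℝ × ℝ)) (p q : ℝ × ℝ → ℝ) (x y : ℝ) : ℝ :=
  ∫ z, (Real.exp (-(x * p z + y * q z)) - 1 + (x * p z + y * q z)) ∂m

noncomputable def Mq (m : Measure (ℝ × ℝ)) (p q : ℝ × ℝ → ℝ) : ℝ :=
  ∫ z, (min (p z) (p z ^ 2) + q z) ∂m

section pt
lemma pt_nonneg (w : ℝ) : 0 ≤ Real.exp (-w) - 1 + w := by
  nlinarith [Real.add_one_le_exp (-w)]

lemma pt_mono {w w' : ℝ} (h0 : 0 ≤ w) (h : w ≤ w') :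
    Real.exp (-w) - 1 + w ≤ Real.exp (-w') - 1 + w' := by
  have h2 : Real.exp (-w') = Real.exp (-w) * Real.exp (-(w' - w)) := by
    rw [← Real.exp_add]; ring_nf
  have h1 : (-(w' - w)) + 1 ≤ Real.exp (-(w' - w)) := Real.add_one_le_exp _
  have h3 : Real.exp (-w) ≤ 1 := Real.exp_le_one_iff.mpr (by linarith)
  nlinarith [Real.exp_pos (-w)]

lemma pt_ub {a b : ℝ} (ha : 0 ≤ a) (hb : 0 ≤ b) :
    Real.exp (-(a + b)) - 1 + (a + b) ≤ min a (a ^ 2) + b := by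
  have hA : Real.exp (-(a + b)) ≤ Real.exp (-a) := Real.exp_le_exp.mpr (by linarith)
  have h1 : Real.exp (-a) ≤ 1 := Real.exp_le_one_iff.mpr (by linarith)
  have h2 : Real.exp (-a) * Real.exp a = 1 := by rw [← Real.exp_add]; simp
  have h3 : a + 1 ≤ Real.exp a := Real.add_one_le_exp a
  have h4 : Real.exp (-a) ≤ 1 - a + a ^ 2 := by nlinarith [Real.exp_pos (-a)]
  rcases le_total a (a ^ 2) with h | h
  · rw [min_eq_left h]; nlinarith
  · rw [min_eq_right h]; nlinarith

lemma pt_qmono {P Q x y y' : ℝ} (hP : 0 ≤ P) (hQ : 0 ≤ Q) (hx : 0 ≤ x) (hy : 0 ≤ y)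
    (hyy : y ≤ y') :
    (Real.exp (-(x * P + y' * Q)) - 1 + (x * P + y' * Q))
      - (Real.exp (-(x * P + y * Q)) - 1 + (x * P + y * Q)) ≤ (y' - y) * Q := by
  have h : Real.exp (-(x * P + y' * Q)) ≤ Real.exp (-(x * P + y * Q)) :=
    Real.exp_le_exp.mpr (by nlinarith)
  nlinarith

lemma pt_lip_core {A B : ℝ} (hBA : A ≤ B) :
    (Real.exp (-B) - 1 + B) - (Real.exp (-A) - 1 + A) ≤ (B - A) * (1 - Real.exp (-B)) := by
  have h1 : Real.exp (-A) = Real.exp (-B) * Real.exp (B - A) := by rw [← Real.exp_add]; ring_nf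
  have h2 : (B - A) + 1 ≤ Real.exp (B - A) := Real.add_one_le_exp _
  have h3 : Real.exp (-B) * (B - A) ≤ Real.exp (-A) - Real.exp (-B) := by
    nlinarith [Real.exp_pos (-B)]
  nlinarith

lemma one_sub_exp_bound {B : ℝ} (hB : 0 ≤ B) :
    0 ≤ 1 - Real.exp (-B) ∧ 1 - Real.exp (-B) ≤ 1 ∧ 1 - Real.exp (-B) ≤ B := by
  have h := Real.add_one_le_exp (-B)
  have h2 : Real.exp (-B) ≤ 1 := Real.exp_le_one_iff.mpr (by linarith)
  exact ⟨by linarith, by nlinarith [Real.exp_pos (-B)], by linarith⟩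

lemma pt_lip {P Q x x' y K : ℝ} (hP : 0 ≤ P) (hQ : 0 ≤ Q) (hx : 0 ≤ x) (hxx : x ≤ x')
    (hx'K : x' ≤ K) (hy : 0 ≤ y) (hyK : y ≤ K) :
    (Real.exp (-(x' * P + y * Q)) - 1 + (x' * P + y * Q))
      - (Real.exp (-(x * P + y * Q)) - 1 + (x * P + y * Q))
      ≤ (x' - x) * ((K + 1) * (min P (P ^ 2) + Q)) := by
  have hK : 0 ≤ K := le_trans (le_trans hx hxx) hx'K
  have hA0 : 0 ≤ x * P + y * Q := by positivity
  have hBA : x * P + y * Q ≤ x' * P + y * Q := by nlinarith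
  have h4 := pt_lip_core hBA
  have hB0 : 0 ≤ x' * P + y * Q := le_trans hA0 hBA
  obtain ⟨h7, h5, h6⟩ := one_sub_exp_bound hB0
  have key : P * (1 - Real.exp (-(x' * P + y * Q))) ≤ (K + 1) * (min P (P ^ 2) + Q) := by
    rcases le_total 1 P with h | h
    · have hmin : min P (P ^ 2) = P := min_eq_left (by nlinarith)
      rw [hmin]; nlinarith
    · have hmin : min P (P ^ 2) = P ^ 2 := min_eq_right (by nlinarith)
      rw [hmin]
      have hthis : P * (1 - Real.exp (-(x' * P + y * Q))) ≤ P * (x' * P + y * Q) := by nlinarith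
      have h8 : P * (x' * P + y * Q) ≤ K * P ^ 2 + K * (P * Q) := by
        nlinarith [mul_le_mul_of_nonneg_right hx'K (sq_nonneg P),
          mul_le_mul_of_nonneg_right hyK (mul_nonneg hP hQ)]
      have h9 : K * (P * Q) ≤ K * Q := by
        nlinarith [mul_le_mul_of_nonneg_left (mul_le_of_le_one_left hQ h) hK]
      nlinarith
  calc (Real.exp (-(x' * P + y * Q)) - 1 + (x' * P + y * Q))
      - (Real.exp (-(x * P + y * Q)) - 1 + (x * P + y * Q))
      ≤ ((x' * P + y * Q) - (x * P + y * Q)) * (1 - Real.exp (-(x' * P + y * Q))) := h4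
    _ = (x' - x) * (P * (1 - Real.exp (-(x' * P + y * Q)))) := by ring
    _ ≤ (x' - x) * ((K + 1) * (min P (P ^ 2) + Q)) := by
        apply mul_le_mul_of_nonneg_left key (by linarith)

lemma min_scale {x P : ℝ} (hx : 0 ≤ x) (hP : 0 ≤ P) :
    min (x * P) ((x * P) ^ 2) ≤ (x + x ^ 2) * min P (P ^ 2) := by
  rcases le_total P (P ^ 2) with h | h
  · rw [min_eq_left h]
    calc min (x * P) ((x * P) ^ 2) ≤ x * P := min_le_left _ _
      _ ≤ (x + x ^ 2) * P := by nlinarith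
  · rw [min_eq_right h]
    calc min (x * P) ((x * P) ^ 2) ≤ (x * P) ^ 2 := min_le_right _ _
      _ ≤ (x + x ^ 2) * P ^ 2 := by nlinarith
end pt

section jint
variable {m : Measure (ℝ × ℝ)} {p q : ℝ × ℝ → ℝ}
variable (hae : ∀ᵐ z ∂m, 0 ≤ p z ∧ 0 ≤ q z)
variable (hpm : Measurable p) (hqm : Measurable q)
variable (hInt : Integrable (fun z => min (p z) (p z ^ 2) + q z) m)

include hae hpm hqm hInt

lemma Jint_meas_z (x y : ℝ) :
    Measurable (fun z => Real.exp (-(x * p z + y * q z)) - 1 + (x * p z + y * q z)) := by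
  have h : Measurable (fun z => x * p z + y * q z) := (hpm.const_mul x).add (hqm.const_mul y)
  exact (h.neg.exp.sub measurable_const).add h

lemma Jint_integrable (x y : ℝ) (hx : 0 ≤ x) (hy : 0 ≤ y) :
    Integrable (fun z => Real.exp (-(x * p z + y * q z)) - 1 + (x * p z + y * q z)) m := by
  refine Integrable.mono' (hInt.const_mul (x + x ^ 2 + y))
    ((Jint_meas_z hae hpm hqm hInt x y).aestronglyMeasurable) ?_
  filter_upwards [hae] with z hz
  have hub := pt_ub (mul_nonneg hx hz.1) (mul_nonneg hy hz.2)
  have hmin0 : 0 ≤ min (p z) (p z ^ 2) := le_min hz.1 (sq_nonneg _)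
  have hms := min_scale hx hz.1
  rw [Real.norm_eq_abs, abs_of_nonneg (pt_nonneg _)]
  calc Real.exp (-(x * p z + y * q z)) - 1 + (x * p z + y * q z)
      ≤ min (x * p z) ((x * p z) ^ 2) + y * q z := hub
    _ ≤ (x + x ^ 2) * min (p z) (p z ^ 2) + y * q z := by linarith
    _ ≤ (x + x ^ 2 + y) * (min (p z) (p z ^ 2) + q z) := by nlinarith [hz.2, mul_nonneg hy hmin0]

lemma Mq_nonneg : 0 ≤ Mq m p q := by
  apply integral_nonneg_of_ae
  filter_upwards [hae] with z hz
  have : 0 ≤ min (p z) (p z ^ 2) := le_min hz.1 (sq_nonneg _)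
  simp only [Pi.zero_apply]
  linarith [hz.2]

lemma Jint_mono {x y x' y' : ℝ} (hx : 0 ≤ x) (hy : 0 ≤ y) (hxx : x ≤ x') (hyy : y ≤ y') :
    Jint m p q x y ≤ Jint m p q x' y' := by
  apply integral_mono_ae (Jint_integrable hae hpm hqm hInt x y hx hy)
    (Jint_integrable hae hpm hqm hInt x' y' (hx.trans hxx) (hy.trans hyy))
  filter_upwards [hae] with z hz
  exact pt_mono (by nlinarith [mul_nonneg hx hz.1, mul_nonneg hy hz.2])
    (by nlinarith [mul_le_mul_of_nonneg_right hxx hz.1, mul_le_mul_of_nonneg_right hyy hz.2])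

lemma Jint_lip {K x x' y : ℝ} (hx : 0 ≤ x) (hxx : x ≤ x') (hx'K : x' ≤ K) (hy : 0 ≤ y)
    (hyK : y ≤ K) :
    Jint m p q x' y - Jint m p q x y ≤ (x' - x) * ((K + 1) * Mq m p q) := by
  have hi1 := Jint_integrable hae hpm hqm hInt x y hx hy
  have hi2 := Jint_integrable hae hpm hqm hInt x' y (hx.trans hxx) hy
  rw [Jint, Jint, ← integral_sub hi2 hi1]
  have hb : Integrable (fun z => ((x' - x) * (K + 1)) * (min (p z) (p z ^ 2) + q z)) m :=
    hInt.const_mul _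
  calc ∫ z, ((Real.exp (-(x' * p z + y * q z)) - 1 + (x' * p z + y * q z))
        - (Real.exp (-(x * p z + y * q z)) - 1 + (x * p z + y * q z))) ∂m
      ≤ ∫ z, ((x' - x) * (K + 1)) * (min (p z) (p z ^ 2) + q z) ∂m := by
        apply integral_mono_ae (hi2.sub hi1) hb
        filter_upwards [hae] with z hz
        have := pt_lip hz.1 hz.2 hx hxx hx'K hy hyK
        calc _ ≤ (x' - x) * ((K + 1) * (min (p z) (p z ^ 2) + q z)) := this
          _ = ((x' - x) * (K + 1)) * (min (p z) (p z ^ 2) + q z) := by ring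
    _ = ((x' - x) * (K + 1)) * Mq m p q := integral_const_mul _ _
    _ = (x' - x) * ((K + 1) * Mq m p q) := by ring

lemma q_integrable : Integrable q m := by
  refine Integrable.mono' hInt hqm.aestronglyMeasurable ?_
  filter_upwards [hae] with z hz
  rw [Real.norm_eq_abs, abs_of_nonneg hz.2]
  have : 0 ≤ min (p z) (p z ^ 2) := le_min hz.1 (sq_nonneg _)
  linarith

lemma Jint_qlip {x y y' : ℝ} (hx : 0 ≤ x) (hy : 0 ≤ y) (hyy : y ≤ y') :
    Jint m p q x y' - Jint m p q x y ≤ (y' - y) * ∫ z, q z ∂m := by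
  have hi1 := Jint_integrable hae hpm hqm hInt x y hx hy
  have hi2 := Jint_integrable hae hpm hqm hInt x y' hx (hy.trans hyy)
  rw [Jint, Jint, ← integral_sub hi2 hi1]
  calc ∫ z, ((Real.exp (-(x * p z + y' * q z)) - 1 + (x * p z + y' * q z))
        - (Real.exp (-(x * p z + y * q z)) - 1 + (x * p z + y * q z))) ∂m
      ≤ ∫ z, (y' - y) * q z ∂m := by
        apply integral_mono_ae (hi2.sub hi1) ((q_integrable hae hpm hqm hInt).const_mul _)
        filter_upwards [hae] with z hz
        exact pt_qmono hz.1 hz.2 hx hy hyy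
    _ = (y' - y) * ∫ z, q z ∂m := integral_const_mul _ _

lemma Jint_abs_bound {K x y : ℝ} (hx : 0 ≤ x) (hy : 0 ≤ y) (hxK : x ≤ K) (hyK : y ≤ K) :
    |Jint m p q x y| ≤ (2 * K + K ^ 2) * Mq m p q := by
  have hK : 0 ≤ K := hx.trans hxK
  have hi := Jint_integrable hae hpm hqm hInt x y hx hy
  calc |Jint m p q x y| ≤ ∫ z, |Real.exp (-(x * p z + y * q z)) - 1 + (x * p z + y * q z)| ∂m := by
        rw [Jint]
        simpa only [Real.norm_eq_abs] using
          norm_integral_le_integral_norm (μ := m)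
            (fun z => Real.exp (-(x * p z + y * q z)) - 1 + (x * p z + y * q z))
    _ ≤ ∫ z, (2 * K + K ^ 2) * (min (p z) (p z ^ 2) + q z) ∂m := by
        apply integral_mono_ae hi.abs (hInt.const_mul _)
        filter_upwards [hae] with z hz
        rw [abs_of_nonneg (pt_nonneg _)]
        have hub := pt_ub (mul_nonneg hx hz.1) (mul_nonneg hy hz.2)
        have hmin0 : 0 ≤ min (p z) (p z ^ 2) := le_min hz.1 (sq_nonneg _)
        have hms := min_scale hx hz.1
        calc Real.exp (-(x * p z + y * q z)) - 1 + (x * p z + y * q z)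
            ≤ min (x * p z) ((x * p z) ^ 2) + y * q z := hub
          _ ≤ (x + x ^ 2) * min (p z) (p z ^ 2) + y * q z := by linarith
          _ ≤ (2 * K + K ^ 2) * (min (p z) (p z ^ 2) + q z) := by
              nlinarith [hz.2, hz.1, mul_le_mul_of_nonneg_right hyK hz.2,
                mul_le_mul_of_nonneg_right hxK hmin0, sq_nonneg x,
                mul_le_mul hxK hxK hx hK]
    _ = (2 * K + K ^ 2) * Mq m p q := integral_const_mul _ _

end jint

section psi
variable {m : Measure (ℝ × ℝ)} {p q : ℝ × ℝ → ℝ}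
variable (hae : ∀ᵐ z ∂m, 0 ≤ p z ∧ 0 ≤ q z)
variable (hpm : Measurable p) (hqm : Measurable q)
variable (hInt : Integrable (fun z => min (p z) (p z ^ 2) + q z) m)

include hae hpm hqm hInt

/-- Key one-sided Lipschitz/quasimonotonicity estimate for the branching mechanism. -/
lemma psi_key {β γ c : ℝ} (hc : 0 ≤ c) (hadm : γ + ∫ z, q z ∂m ≤ 0)
    {K η x y x' y' : ℝ} (hK : 0 ≤ K) (hη : 0 ≤ η)
    (hx : 0 ≤ x) (hy : 0 ≤ y) (hx' : 0 ≤ x') (hy' : 0 ≤ y')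
    (hxK : x ≤ K) (hyK : y ≤ K) (hx'K : x' ≤ K) (hy'K : y' ≤ K)
    (h1 : x ≤ x' + η) (h2 : y ≤ y' + η) :
    (β * x' + γ * y' + c * x' ^ 2 + Jint m p q x' y')
      - (β * x + γ * y + c * x ^ 2 + Jint m p q x y)
      ≤ (|β| + 2 * c * K + (K + 1) * Mq m p q) * (x' - x)
        + ((|β| + 2 * c * K + (K + 1) * Mq m p q) + |β| + |γ|) * η := by
  have hMq : 0 ≤ Mq m p q := Mq_nonneg hae hpm hqm hInt
  have hL1 : 0 ≤ |β| + 2 * c * K + (K + 1) * Mq m p q := by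
    have e1 : 0 ≤ (K + 1) * Mq m p q := mul_nonneg (by linarith) hMq
    have e2 : 0 ≤ 2 * c * K := by positivity
    linarith [abs_nonneg β]
  -- Term 1 : change the second coordinate
  have T1 : (γ * y' + Jint m p q x' y') - (γ * y + Jint m p q x' y) ≤ |γ| * η := by
    rcases le_total y y' with h | h
    · have hq := Jint_qlip hae hpm hqm hInt hx' hy h
      have h0 : (y' - y) * (γ + ∫ z, q z ∂m) ≤ 0 :=
        mul_nonpos_of_nonneg_of_nonpos (sub_nonneg.mpr h) hadm
      have hnn : 0 ≤ |γ| * η := mul_nonneg (abs_nonneg γ) hη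
      linarith
    · have hm := Jint_mono hae hpm hqm hInt hx' hy' (le_refl x') h
      have hy2 : y - y' ≤ η := by linarith
      have hb2 : (-γ) * (y - y') ≤ |γ| * (y - y') :=
        mul_le_mul_of_nonneg_right (neg_le_abs γ) (sub_nonneg.mpr h)
      have hb3 : |γ| * (y - y') ≤ |γ| * η := mul_le_mul_of_nonneg_left hy2 (abs_nonneg γ)
      linarith
  -- Term 2 : change the first coordinate
  have T2 : (β * x' + c * x' ^ 2 + Jint m p q x' y) - (β * x + c * x ^ 2 + Jint m p q x y)
      ≤ (|β| + 2 * c * K + (K + 1) * Mq m p q) * (x' - x)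
        + ((|β| + 2 * c * K + (K + 1) * Mq m p q) + |β|) * η := by
    rcases le_total x x' with h | h
    · have hl := Jint_lip hae hpm hqm hInt hx h hx'K hy hyK
      have hb : β * (x' - x) ≤ |β| * (x' - x) :=
        mul_le_mul_of_nonneg_right (le_abs_self β) (by linarith)
      have e1 : c * (x' + x) ≤ c * (K + K) :=
        mul_le_mul_of_nonneg_left (add_le_add hx'K hxK) hc
      have hcq : c * x' ^ 2 - c * x ^ 2 ≤ 2 * c * K * (x' - x) := by
        nlinarith [mul_le_mul_of_nonneg_right e1 (sub_nonneg.mpr h)]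
      have hnn : 0 ≤ ((|β| + 2 * c * K + (K + 1) * Mq m p q) + |β|) * η :=
        mul_nonneg (add_nonneg hL1 (abs_nonneg β)) hη
      linarith
    · have hm := Jint_mono hae hpm hqm hInt hx' hy h (le_refl y)
      have hx2 : x - x' ≤ η := by linarith
      have hb : (-β) * (x - x') ≤ |β| * (x - x') :=
        mul_le_mul_of_nonneg_right (neg_le_abs β) (sub_nonneg.mpr h)
      have hcq : c * x' ^ 2 - c * x ^ 2 ≤ 0 := by
        have := pow_le_pow_left₀ hx' h 2
        nlinarith
      have h3 : |β| * (x - x') ≤ |β| * η := mul_le_mul_of_nonneg_left hx2 (abs_nonneg β)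
      have h4 : (|β| + 2 * c * K + (K + 1) * Mq m p q) * (x - x')
          ≤ (|β| + 2 * c * K + (K + 1) * Mq m p q) * η :=
        mul_le_mul_of_nonneg_left hx2 hL1
      have h5 : 0 ≤ (|β| + 2 * c * K + (K + 1) * Mq m p q) * (x - x') :=
        mul_nonneg hL1 (sub_nonneg.mpr h)
      linarith
  linarith

omit hae hInt in
/-- Measurability of the composed integral term. -/
lemma Jint_meas_comp {a b : ℝ → ℝ} (ha : Measurable a) (hb : Measurable b)
    [SigmaFinite m] : Measurable (fun s : ℝ => Jint m p q (a s) (b s)) := by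
  have hU : StronglyMeasurable (Function.uncurry fun (s : ℝ) (z : ℝ × ℝ) =>
      Real.exp (-(a s * p z + b s * q z)) - 1 + (a s * p z + b s * q z)) := by
    apply Measurable.stronglyMeasurable
    have h1 : Measurable (fun sz : ℝ × (ℝ × ℝ) => a sz.1 * p sz.2 + b sz.1 * q sz.2) :=
      ((ha.comp measurable_fst).mul (hpm.comp measurable_snd)).add
        ((hb.comp measurable_fst).mul (hqm.comp measurable_snd))
    exact (h1.neg.exp.sub measurable_const).add h1
  exact hU.integral_prod_right.measurable

end psi


lemma psi_abs_bound {m : Measure (ℝ × ℝ)} {p q : ℝ × ℝ → ℝ}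
    (hae : ∀ᵐ z ∂m, 0 ≤ p z ∧ 0 ≤ q z) (hpm : Measurable p) (hqm : Measurable q)
    (hInt : Integrable (fun z => min (p z) (p z ^ 2) + q z) m)
    {β γ c K x y : ℝ} (hc : 0 ≤ c) (hx : 0 ≤ x) (hy : 0 ≤ y) (hxK : x ≤ K) (hyK : y ≤ K) :
    |β * x + γ * y + c * x ^ 2 + Jint m p q x y|
      ≤ |β| * K + |γ| * K + c * K ^ 2 + (2 * K + K ^ 2) * Mq m p q := by
  have hK : 0 ≤ K := hx.trans hxK
  have hJ := Jint_abs_bound hae hpm hqm hInt hx hy hxK hyK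
  have h1 : |β * x| ≤ |β| * K := by
    rw [abs_mul, abs_of_nonneg hx]
    exact mul_le_mul_of_nonneg_left hxK (abs_nonneg β)
  have h2 : |γ * y| ≤ |γ| * K := by
    rw [abs_mul, abs_of_nonneg hy]
    exact mul_le_mul_of_nonneg_left hyK (abs_nonneg γ)
  have h3 : |c * x ^ 2| ≤ c * K ^ 2 := by
    rw [abs_mul, abs_of_nonneg hc, abs_of_nonneg (sq_nonneg x)]
    exact mul_le_mul_of_nonneg_left (pow_le_pow_left₀ hx hxK 2) hc
  calc |β * x + γ * y + c * x ^ 2 + Jint m p q x y|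
      ≤ |β * x + γ * y + c * x ^ 2| + |Jint m p q x y| := abs_add_le _ _
    _ ≤ |β * x + γ * y| + |c * x ^ 2| + |Jint m p q x y| := by
        linarith [abs_add_le (β * x + γ * y) (c * x ^ 2)]
    _ ≤ |β * x| + |γ * y| + |c * x ^ 2| + |Jint m p q x y| := by
        linarith [abs_add_le (β * x) (γ * y)]
    _ ≤ |β| * K + |γ| * K + c * K ^ 2 + (2 * K + K ^ 2) * Mq m p q := by linarith

lemma no_touch {r0 t ε : ℝ} (hr0 : r0 ≤ t) (hε : 0 < ε)
    (g1 g2 H1 H2 : ℝ → ℝ) (hg1c : Continuous g1) (hg2c : Continuous g2)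
    (hstep1 : ∀ a ∈ Set.Icc r0 t, ∀ b ∈ Set.Icc r0 t, a ≤ b →
      g1 b - g1 a = ∫ s in a..b, H1 s)
    (hstep2 : ∀ a ∈ Set.Icc r0 t, ∀ b ∈ Set.Icc r0 t, a ≤ b →
      g2 b - g2 a = ∫ s in a..b, H2 s)
    (hH1i : ∀ a ∈ Set.Icc r0 t, ∀ b ∈ Set.Icc r0 t, IntervalIntegrable H1 volume a b)
    (hH2i : ∀ a ∈ Set.Icc r0 t, ∀ b ∈ Set.Icc r0 t, IntervalIntegrable H2 volume a b)
    (hbd1 : ∀ s ∈ Set.Icc r0 t, 0 ≤ g1 s → 0 ≤ g2 s → g1 s ≤ ε → H1 s ≤ -ε)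
    (hbd2 : ∀ s ∈ Set.Icc r0 t, 0 ≤ g1 s → 0 ≤ g2 s → g2 s ≤ ε → H2 s ≤ -ε)
    (hend1 : 0 < g1 t) (hend2 : 0 < g2 t) :
    ∀ r ∈ Set.Icc r0 t, 0 < g1 r ∧ 0 < g2 r := by
  by_contra hcon
  push_neg at hcon
  obtain ⟨r, hrIcc, hr⟩ := hcon
  have hS0 : g1 r ≤ 0 ∨ g2 r ≤ 0 := by
    rcases le_or_gt (g1 r) 0 with h | h
    · exact Or.inl h
    · exact Or.inr (hr h)
  set S : Set ℝ := Set.Icc r0 t ∩ (g1 ⁻¹' Set.Iic 0 ∪ g2 ⁻¹' Set.Iic 0) with hSdef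
  have hmemS : ∀ x, x ∈ S ↔ x ∈ Set.Icc r0 t ∧ (g1 x ≤ 0 ∨ g2 x ≤ 0) := by
    intro x
    simp [hSdef, Set.mem_inter_iff, Set.mem_union, Set.mem_preimage, Set.mem_Iic]
  have hSne : S.Nonempty := ⟨r, (hmemS r).mpr ⟨hrIcc, hS0⟩⟩
  have hSclosed : IsClosed S :=
    isClosed_Icc.inter ((IsClosed.preimage hg1c isClosed_Iic).union
      (IsClosed.preimage hg2c isClosed_Iic))
  have hScomp : IsCompact S :=
    isCompact_Icc.of_isClosed_subset hSclosed Set.inter_subset_left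
  have hrs_ex : ∃ rs, rs = sSup S := ⟨_, rfl⟩
  obtain ⟨rs, hrsdef⟩ := hrs_ex
  have hrsS : rs ∈ S := hrsdef ▸ hScomp.sSup_mem hSne
  have hrsIcc : rs ∈ Set.Icc r0 t := ((hmemS rs).mp hrsS).1
  have htnot : t ∉ S := by
    intro ht
    rcases ((hmemS t).mp ht).2 with h | h
    · linarith
    · linarith
  have hrst : rs < t := lt_of_le_of_ne hrsIcc.2 (fun h => htnot (h ▸ hrsS))
  have hpos : ∀ s ∈ Set.Icc r0 t, rs < s → 0 < g1 s ∧ 0 < g2 s := by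
    intro s hsI hss
    by_contra hno
    have hsS : s ∈ S := by
      refine (hmemS s).mpr ⟨hsI, ?_⟩
      by_contra hno2
      push_neg at hno2
      exact hno ⟨hno2.1, hno2.2⟩
    have : s ≤ rs := hrsdef ▸ le_csSup hScomp.bddAbove hsS
    linarith
  have hge : ∀ s ∈ Set.Icc r0 t, rs ≤ s → 0 ≤ g1 s ∧ 0 ≤ g2 s := by
    intro s hsI hss
    rcases eq_or_lt_of_le hss with heq | h
    · rw [← heq]
      rw [← heq] at hsI
      haveI : (nhdsWithin rs (Set.Ioc rs t)).NeBot := left_nhdsWithin_Ioc_neBot hrst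
      have hsub : ∀ x ∈ Set.Ioc rs t, x ∈ Set.Icc r0 t := fun x hx =>
        ⟨le_trans hsI.1 hx.1.le, hx.2⟩
      constructor
      · refine ge_of_tendsto ((hg1c.tendsto rs).mono_left (nhdsWithin_le_nhds (s := Set.Ioc rs t))) ?_
        filter_upwards [self_mem_nhdsWithin] with x hx
        exact (hpos x (hsub x hx) hx.1).1.le
      · refine ge_of_tendsto ((hg2c.tendsto rs).mono_left (nhdsWithin_le_nhds (s := Set.Ioc rs t))) ?_
        filter_upwards [self_mem_nhdsWithin] with x hx
        exact (hpos x (hsub x hx) hx.1).2.le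
    · exact ⟨(hpos s hsI h).1.le, (hpos s hsI h).2.le⟩
  have key : ∀ g H : ℝ → ℝ, Continuous g →
      (∀ a ∈ Set.Icc r0 t, ∀ b ∈ Set.Icc r0 t, a ≤ b → g b - g a = ∫ s in a..b, H s) →
      (∀ a ∈ Set.Icc r0 t, ∀ b ∈ Set.Icc r0 t, IntervalIntegrable H volume a b) →
      (∀ s ∈ Set.Icc r0 t, rs ≤ s → g s ≤ ε → H s ≤ -ε) →
      (∀ s ∈ Set.Icc r0 t, rs < s → 0 < g s) →
      g rs ≤ 0 → False := by
    intro g H hgc hstep hHi hbd hgp hg0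
    have hev := (hgc.tendsto rs).eventually_lt_const (show g rs < ε by linarith)
    rw [Metric.eventually_nhds_iff] at hev
    obtain ⟨δ, hδ0, hδ⟩ := hev
    set r1 := min t (rs + δ / 2) with hr1def
    have hr1gt : rs < r1 := lt_min hrst (by linarith)
    have hr1Icc : r1 ∈ Set.Icc r0 t := ⟨le_trans hrsIcc.1 hr1gt.le, min_le_left _ _⟩
    have hr1small : ∀ s ∈ Set.Icc rs r1, g s ≤ ε := by
      intro s hs
      apply le_of_lt
      apply hδ
      rw [Real.dist_eq, abs_of_nonneg (by linarith [hs.1])]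
      have h2 : s ≤ rs + δ / 2 := le_trans hs.2 (min_le_right _ _)
      linarith
    have hIccsub : Set.Icc rs r1 ⊆ Set.Icc r0 t := fun s hs =>
      ⟨le_trans hrsIcc.1 hs.1, le_trans hs.2 hr1Icc.2⟩
    have hmono : ∫ s in rs..r1, H s ≤ ∫ s in rs..r1, (-ε : ℝ) := by
      apply intervalIntegral.integral_mono_on hr1gt.le (hHi rs hrsIcc r1 hr1Icc)
        intervalIntegrable_const
      intro s hs
      exact hbd s (hIccsub hs) hs.1 (hr1small s hs)
    rw [intervalIntegral.integral_const, smul_eq_mul] at hmono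
    have hstepr := hstep rs hrsIcc r1 hr1Icc hr1gt.le
    have hfin : g r1 ≤ g rs + (r1 - rs) * (-ε) := by linarith
    have := hgp r1 hr1Icc hr1gt
    nlinarith [mul_pos (sub_pos.mpr hr1gt) hε]
  rcases ((hmemS rs).mp hrsS).2 with h0 | h0
  · exact key g1 H1 hg1c hstep1 hH1i
      (fun s hsI hrs hsm => hbd1 s hsI (hge s hsI hrs).1 (hge s hsI hrs).2 hsm)
      (fun s hsI h => (hpos s hsI h).1) h0
  · exact key g2 H2 hg2c hstep2 hH2i
      (fun s hsI hrs hsm => hbd2 s hsI (hge s hsI hrs).1 (hge s hsI hrs).2 hsm)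
      (fun s hsI h => (hpos s hsI h).2) h0


lemma phi1_smul (b : Matrix (Fin 2) (Fin 2) ℝ) (c1 : ℝ) (m1 : Measure (ℝ × ℝ)) (e : ℝ)
    (v : ℝ × ℝ) :
    phi1 b c1 m1 (e • v) = b 0 0 * (e * v.1) + b 0 1 * (e * v.2) + c1 * (e * v.1) ^ 2
      + Jint m1 Prod.fst Prod.snd (e * v.1) (e * v.2) := rfl

lemma phi2_smul (b : Matrix (Fin 2) (Fin 2) ℝ) (c2 : ℝ) (m2 : Measure (ℝ × ℝ)) (e : ℝ)
    (v : ℝ × ℝ) :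
    phi2 b c2 m2 (e • v) = b 1 1 * (e * v.2) + b 1 0 * (e * v.1) + c2 * (e * v.2) ^ 2
      + Jint m2 Prod.snd Prod.fst (e * v.2) (e * v.1) := by
  have hfun : (fun z : ℝ × ℝ =>
      Real.exp (-(e * v.2 * Prod.snd z + e * v.1 * Prod.fst z)) - 1
        + (e * v.2 * Prod.snd z + e * v.1 * Prod.fst z))
      = (fun z : ℝ × ℝ =>
      Real.exp (-((e • v).1 * z.1 + (e • v).2 * z.2)) - 1
        + ((e • v).1 * z.1 + (e • v).2 * z.2)) := by
    funext z
    have h1 : (e • v).1 = e * v.1 := rfl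
    have h2 : (e • v).2 = e * v.2 := rfl
    rw [h1, h2]; ring_nf
  rw [phi2, Jint, hfun]
  have h1 : (e • v).1 = e * v.1 := rfl
  have h2 : (e • v).2 = e * v.2 := rfl
  rw [h1, h2]; ring

set_option maxHeartbeats 4000000 in
/-- Monotonicity of the cumulant semigroup in its terminal value: if `λ ≤ λ'`
componentwise, then the corresponding continuous quadrant-valued solutions `u` and `u'`
of the backward equation `u⁽ⁱ⁾(r) = λ_i − ∫_r^t e^{ξ(s)} φ_i(e^{−ξ(s)} u(s)) ds`
satisfy `u⁽ⁱ⁾(r) ≤ u'⁽ⁱ⁾(r)` for `i = 1, 2` and all `r ∈ [r0, t]`. -/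
theorem stmt15 (b : Matrix (Fin 2) (Fin 2) ℝ) (c1 c2 : ℝ) (hc1 : 0 ≤ c1) (hc2 : 0 ≤ c2)
    (m1 m2 : Measure (ℝ × ℝ)) [SigmaFinite m1] [SigmaFinite m2]
    (hsupp1 : m1 quadrantᶜ = 0) (hzero1 : m1 {0} = 0)
    (hsupp2 : m2 quadrantᶜ = 0) (hzero2 : m2 {0} = 0)
    (hmom1 : ∫⁻ z, ENNReal.ofReal (min z.1 (z.1 ^ 2) + z.2) ∂m1 < ⊤)
    (hmom2 : ∫⁻ z, ENNReal.ofReal (min z.2 (z.2 ^ 2) + z.1) ∂m2 < ⊤)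
    (hadm1 : b 0 1 + ∫ z, z.2 ∂m1 ≤ 0)
    (hadm2 : b 1 0 + ∫ z, z.1 ∂m2 ≤ 0)
    (t r0 : ℝ) (hr0 : r0 ≤ t)
    (ξ : ℝ → ℝ) (hξmeas : Measurable ξ)
    (hξbdd : ∃ C : ℝ, ∀ s ∈ Set.Icc r0 t, |ξ s| ≤ C)
    (lam lam' : ℝ × ℝ) (hlam : lam ∈ quadrant) (hlam' : lam' ∈ quadrant)
    (hle1 : lam.1 ≤ lam'.1) (hle2 : lam.2 ≤ lam'.2)
    (u u' : ℝ → ℝ × ℝ)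
    (hucont : ContinuousOn u (Set.Icc r0 t))
    (hu'cont : ContinuousOn u' (Set.Icc r0 t))
    (huquad : ∀ r ∈ Set.Icc r0 t, u r ∈ quadrant)
    (hu'quad : ∀ r ∈ Set.Icc r0 t, u' r ∈ quadrant)
    (hueq1 : ∀ r ∈ Set.Icc r0 t,
      (u r).1 = lam.1 - ∫ s in r..t,
        Real.exp (ξ s) * phi1 b c1 m1 (Real.exp (-ξ s) • u s))
    (hueq2 : ∀ r ∈ Set.Icc r0 t,
      (u r).2 = lam.2 - ∫ s in r..t,
        Real.exp (ξ s) * phi2 b c2 m2 (Real.exp (-ξ s) • u s))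
    (hu'eq1 : ∀ r ∈ Set.Icc r0 t,
      (u' r).1 = lam'.1 - ∫ s in r..t,
        Real.exp (ξ s) * phi1 b c1 m1 (Real.exp (-ξ s) • u' s))
    (hu'eq2 : ∀ r ∈ Set.Icc r0 t,
      (u' r).2 = lam'.2 - ∫ s in r..t,
        Real.exp (ξ s) * phi2 b c2 m2 (Real.exp (-ξ s) • u' s)) :
    ∀ r ∈ Set.Icc r0 t, (u r).1 ≤ (u' r).1 ∧ (u r).2 ≤ (u' r).2 := by
  classical
  -- bound for ξ
  obtain ⟨C₀, hC₀⟩ := hξbdd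
  obtain ⟨C, hCdef⟩ : ∃ x : ℝ, x = max C₀ 0 := ⟨_, rfl⟩
  have hC : ∀ s ∈ Set.Icc r0 t, |ξ s| ≤ C := fun s hs =>
    (hC₀ s hs).trans (hCdef ▸ le_max_left _ _)
  have hC0 : 0 ≤ C := hCdef ▸ le_max_right _ _
  -- clamp and global continuous extensions of u, u'
  obtain ⟨cl, hcldef⟩ : ∃ f : ℝ → ℝ, f = fun s => min (max s r0) t := ⟨_, rfl⟩
  have hclmem : ∀ s, cl s ∈ Set.Icc r0 t := by
    intro s; rw [hcldef]
    exact ⟨le_min (le_max_right _ _) hr0, min_le_right _ _⟩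
  have hclid : ∀ s ∈ Set.Icc r0 t, cl s = s := by
    intro s hs; rw [hcldef]; simp only
    rw [max_eq_left hs.1, min_eq_left hs.2]
  have hclcont : Continuous cl := by
    rw [hcldef]; exact (continuous_id.max continuous_const).min continuous_const
  obtain ⟨U, hUdef⟩ : ∃ f : ℝ → ℝ × ℝ, f = fun s => u (cl s) := ⟨_, rfl⟩
  obtain ⟨U', hU'def⟩ : ∃ f : ℝ → ℝ × ℝ, f = fun s => u' (cl s) := ⟨_, rfl⟩
  have hUc : Continuous U := by rw [hUdef]; exact hucont.comp_continuous hclcont hclmem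
  have hU'c : Continuous U' := by rw [hU'def]; exact hu'cont.comp_continuous hclcont hclmem
  have hUeq : ∀ s ∈ Set.Icc r0 t, U s = u s := by
    intro s hs; rw [hUdef]; simp only; rw [hclid s hs]
  have hU'eq : ∀ s ∈ Set.Icc r0 t, U' s = u' s := by
    intro s hs; rw [hU'def]; simp only; rw [hclid s hs]
  have hUquad : ∀ s, U s ∈ quadrant := by
    intro s; rw [hUdef]; exact huquad _ (hclmem s)
  have hU'quad : ∀ s, U' s ∈ quadrant := by
    intro s; rw [hU'def]; exact hu'quad _ (hclmem s)
  -- norm bounds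
  obtain ⟨Ku₀, hKu₀⟩ := isCompact_Icc.exists_bound_of_continuousOn hucont
  obtain ⟨Ku'₀, hKu'₀⟩ := isCompact_Icc.exists_bound_of_continuousOn hu'cont
  have hKuU : ∀ s, ‖U s‖ ≤ Ku₀ := by intro s; rw [hUdef]; exact hKu₀ _ (hclmem s)
  have hKu'U : ∀ s, ‖U' s‖ ≤ Ku'₀ := by intro s; rw [hU'def]; exact hKu'₀ _ (hclmem s)
  have hKu0 : 0 ≤ Ku₀ := le_trans (norm_nonneg _) (hKuU r0)
  have hKu'0 : 0 ≤ Ku'₀ := le_trans (norm_nonneg _) (hKu'U r0)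
  -- global scale K
  obtain ⟨K, hKdef⟩ : ∃ x : ℝ, x = Real.exp C * Ku₀ + Real.exp C * Ku'₀ + 1 := ⟨_, rfl⟩
  have hK0 : 0 ≤ K := by
    rw [hKdef]
    have := Real.exp_nonneg C
    nlinarith
  have heC1 : ∀ s ∈ Set.Icc r0 t, Real.exp (-ξ s) ≤ Real.exp C := by
    intro s hs; apply Real.exp_le_exp.mpr
    have := abs_le.mp (hC s hs); linarith [this.1]
  have heC2 : ∀ s ∈ Set.Icc r0 t, Real.exp (ξ s) ≤ Real.exp C := by
    intro s hs; apply Real.exp_le_exp.mpr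
    have := abs_le.mp (hC s hs); linarith [this.2]
  -- componentwise bounds for the scaled solutions
  have hcomp : ∀ s ∈ Set.Icc r0 t,
      0 ≤ Real.exp (-ξ s) * (U s).1 ∧ Real.exp (-ξ s) * (U s).1 ≤ K ∧
      0 ≤ Real.exp (-ξ s) * (U s).2 ∧ Real.exp (-ξ s) * (U s).2 ≤ K ∧
      0 ≤ Real.exp (-ξ s) * (U' s).1 ∧ Real.exp (-ξ s) * (U' s).1 ≤ K ∧
      0 ≤ Real.exp (-ξ s) * (U' s).2 ∧ Real.exp (-ξ s) * (U' s).2 ≤ K := by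
    intro s hs
    have he0 : 0 ≤ Real.exp (-ξ s) := (Real.exp_pos _).le
    have heC := heC1 s hs
    have hcmp : ∀ v : ℝ × ℝ, (∀ r', ‖v‖ ≤ r') → True := fun _ _ => trivial
    have habs1 : (U s).1 ≤ Ku₀ := by
      have h1 : ‖(U s).1‖ ≤ ‖U s‖ := norm_fst_le _
      rw [Real.norm_eq_abs] at h1
      exact le_trans (le_abs_self _) (le_trans h1 (hKuU s))
    have habs2 : (U s).2 ≤ Ku₀ := by
      have h1 : ‖(U s).2‖ ≤ ‖U s‖ := norm_snd_le _
      rw [Real.norm_eq_abs] at h1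
      exact le_trans (le_abs_self _) (le_trans h1 (hKuU s))
    have habs1' : (U' s).1 ≤ Ku'₀ := by
      have h1 : ‖(U' s).1‖ ≤ ‖U' s‖ := norm_fst_le _
      rw [Real.norm_eq_abs] at h1
      exact le_trans (le_abs_self _) (le_trans h1 (hKu'U s))
    have habs2' : (U' s).2 ≤ Ku'₀ := by
      have h1 : ‖(U' s).2‖ ≤ ‖U' s‖ := norm_snd_le _
      rw [Real.norm_eq_abs] at h1
      exact le_trans (le_abs_self _) (le_trans h1 (hKu'U s))
    have hfin : ∀ x : ℝ, 0 ≤ x → x ≤ Ku₀ → Real.exp (-ξ s) * x ≤ K := by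
      intro x hx hxK
      have h1 : Real.exp (-ξ s) * x ≤ Real.exp C * Ku₀ :=
        mul_le_mul heC hxK hx (Real.exp_nonneg C)
      rw [hKdef]
      nlinarith [mul_nonneg (Real.exp_nonneg C) hKu'0]
    have hfin' : ∀ x : ℝ, 0 ≤ x → x ≤ Ku'₀ → Real.exp (-ξ s) * x ≤ K := by
      intro x hx hxK
      have h1 : Real.exp (-ξ s) * x ≤ Real.exp C * Ku'₀ :=
        mul_le_mul heC hxK hx (Real.exp_nonneg C)
      rw [hKdef]
      nlinarith [mul_nonneg (Real.exp_nonneg C) hKu0]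
    exact ⟨mul_nonneg he0 (hUquad s).1, hfin _ (hUquad s).1 habs1,
      mul_nonneg he0 (hUquad s).2, hfin _ (hUquad s).2 habs2,
      mul_nonneg he0 (hU'quad s).1, hfin' _ (hU'quad s).1 habs1',
      mul_nonneg he0 (hU'quad s).2, hfin' _ (hU'quad s).2 habs2'⟩
  -- measure-side packaging
  have hqc : quadrantᶜ = {z : ℝ × ℝ | ¬ (0 ≤ z.1 ∧ 0 ≤ z.2)} := by
    ext z; simp [quadrant]
  have hae1 : ∀ᵐ z ∂m1, 0 ≤ z.1 ∧ 0 ≤ z.2 := by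
    rw [ae_iff, ← hqc]; exact hsupp1
  have hae2 : ∀ᵐ z ∂m2, 0 ≤ z.2 ∧ 0 ≤ z.1 := by
    have h : ∀ᵐ z ∂m2, 0 ≤ z.1 ∧ 0 ≤ z.2 := by rw [ae_iff, ← hqc]; exact hsupp2
    filter_upwards [h] with z hz; exact ⟨hz.2, hz.1⟩
  have hInt1 : Integrable (fun z : ℝ × ℝ => min z.1 (z.1 ^ 2) + z.2) m1 := by
    refine ⟨((measurable_fst.min (measurable_fst.pow_const 2)).add
      measurable_snd).aestronglyMeasurable, ?_⟩
    rw [hasFiniteIntegral_iff_ofReal ?_]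
    · exact hmom1
    · filter_upwards [hae1] with z hz
      simp only [Pi.zero_apply]
      have : 0 ≤ min z.1 (z.1 ^ 2) := le_min hz.1 (sq_nonneg _)
      linarith [hz.2]
  have hInt2 : Integrable (fun z : ℝ × ℝ => min z.2 (z.2 ^ 2) + z.1) m2 := by
    refine ⟨((measurable_snd.min (measurable_snd.pow_const 2)).add
      measurable_fst).aestronglyMeasurable, ?_⟩
    rw [hasFiniteIntegral_iff_ofReal ?_]
    · exact hmom2
    · filter_upwards [hae2] with z hz
      simp only [Pi.zero_apply]
      have : 0 ≤ min z.2 (z.2 ^ 2) := le_min hz.1 (sq_nonneg _)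
      linarith [hz.2]
  -- constants
  obtain ⟨L1a, hL1a⟩ : ∃ x : ℝ,
      x = |b 0 0| + 2 * c1 * K + (K + 1) * Mq m1 Prod.fst Prod.snd := ⟨_, rfl⟩
  obtain ⟨L2a, hL2a⟩ : ∃ x : ℝ, x = L1a + |b 0 0| + |b 0 1| := ⟨_, rfl⟩
  obtain ⟨L1b, hL1b⟩ : ∃ x : ℝ,
      x = |b 1 1| + 2 * c2 * K + (K + 1) * Mq m2 Prod.snd Prod.fst := ⟨_, rfl⟩
  obtain ⟨L2b, hL2b⟩ : ∃ x : ℝ, x = L1b + |b 1 1| + |b 1 0| := ⟨_, rfl⟩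
  obtain ⟨L', hL'⟩ : ∃ x : ℝ, x = max L2a L2b + 1 := ⟨_, rfl⟩
  have hM1 : 0 ≤ Mq m1 Prod.fst Prod.snd :=
    Mq_nonneg hae1 measurable_fst measurable_snd hInt1
  have hM2 : 0 ≤ Mq m2 Prod.snd Prod.fst :=
    Mq_nonneg hae2 measurable_snd measurable_fst hInt2
  have hL1a0 : 0 ≤ L1a := by
    rw [hL1a]
    nlinarith [abs_nonneg (b 0 0), mul_nonneg hc1 hK0,
      mul_nonneg (show (0:ℝ) ≤ K + 1 by linarith) hM1]
  have hL1b0 : 0 ≤ L1b := by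
    rw [hL1b]
    nlinarith [abs_nonneg (b 1 1), mul_nonneg hc2 hK0,
      mul_nonneg (show (0:ℝ) ≤ K + 1 by linarith) hM2]
  have hL2a0 : 0 ≤ L2a := by
    rw [hL2a]; linarith [abs_nonneg (b 0 0), abs_nonneg (b 0 1)]
  have hL2b0 : 0 ≤ L2b := by
    rw [hL2b]; linarith [abs_nonneg (b 1 1), abs_nonneg (b 1 0)]
  have hL'a : L2a + 1 ≤ L' := by rw [hL']; linarith [le_max_left L2a L2b]
  have hL'b : L2b + 1 ≤ L' := by rw [hL']; linarith [le_max_right L2a L2b]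
  have hL'0 : 0 ≤ L' := by linarith
  -- measurability
  have hUm : Measurable U := hUc.measurable
  have hU'm : Measurable U' := hU'c.measurable
  have ha1 : Measurable (fun s => Real.exp (-ξ s) * (U s).1) :=
    (hξmeas.neg.exp).mul (measurable_fst.comp hUm)
  have ha2 : Measurable (fun s => Real.exp (-ξ s) * (U s).2) :=
    (hξmeas.neg.exp).mul (measurable_snd.comp hUm)
  have ha1' : Measurable (fun s => Real.exp (-ξ s) * (U' s).1) :=
    (hξmeas.neg.exp).mul (measurable_fst.comp hU'm)
  have ha2' : Measurable (fun s => Real.exp (-ξ s) * (U' s).2) :=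
    (hξmeas.neg.exp).mul (measurable_snd.comp hU'm)
  have hF1m : Measurable (fun s => Real.exp (ξ s) * phi1 b c1 m1 (Real.exp (-ξ s) • U s)) := by
    apply (hξmeas.exp).mul
    simp only [phi1_smul]
    exact (((ha1.const_mul (b 0 0)).add (ha2.const_mul (b 0 1))).add
      ((ha1.pow_const 2).const_mul c1)).add
      (Jint_meas_comp measurable_fst measurable_snd ha1 ha2)
  have hF1'm : Measurable (fun s => Real.exp (ξ s) * phi1 b c1 m1 (Real.exp (-ξ s) • U' s)) := by
    apply (hξmeas.exp).mul
    simp only [phi1_smul]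
    exact (((ha1'.const_mul (b 0 0)).add (ha2'.const_mul (b 0 1))).add
      ((ha1'.pow_const 2).const_mul c1)).add
      (Jint_meas_comp measurable_fst measurable_snd ha1' ha2')
  have hF2m : Measurable (fun s => Real.exp (ξ s) * phi2 b c2 m2 (Real.exp (-ξ s) • U s)) := by
    apply (hξmeas.exp).mul
    simp only [phi2_smul]
    exact (((ha2.const_mul (b 1 1)).add (ha1.const_mul (b 1 0))).add
      ((ha2.pow_const 2).const_mul c2)).add
      (Jint_meas_comp measurable_snd measurable_fst ha2 ha1)
  have hF2'm : Measurable (fun s => Real.exp (ξ s) * phi2 b c2 m2 (Real.exp (-ξ s) • U' s)) := by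
    apply (hξmeas.exp).mul
    simp only [phi2_smul]
    exact (((ha2'.const_mul (b 1 1)).add (ha1'.const_mul (b 1 0))).add
      ((ha2'.pow_const 2).const_mul c2)).add
      (Jint_meas_comp measurable_snd measurable_fst ha2' ha1')
  -- bounds for the phi values
  have hphi1bd : ∀ s ∈ Set.Icc r0 t, |phi1 b c1 m1 (Real.exp (-ξ s) • U s)|
      ≤ |b 0 0| * K + |b 0 1| * K + c1 * K ^ 2 + (2 * K + K ^ 2) * Mq m1 Prod.fst Prod.snd := by
    intro s hs
    obtain ⟨q1, q2, q3, q4, _, _, _, _⟩ := hcomp s hs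
    rw [phi1_smul]
    exact psi_abs_bound hae1 measurable_fst measurable_snd hInt1 hc1 q1 q3 q2 q4
  have hphi1'bd : ∀ s ∈ Set.Icc r0 t, |phi1 b c1 m1 (Real.exp (-ξ s) • U' s)|
      ≤ |b 0 0| * K + |b 0 1| * K + c1 * K ^ 2 + (2 * K + K ^ 2) * Mq m1 Prod.fst Prod.snd := by
    intro s hs
    obtain ⟨_, _, _, _, q5, q6, q7, q8⟩ := hcomp s hs
    rw [phi1_smul]
    exact psi_abs_bound hae1 measurable_fst measurable_snd hInt1 hc1 q5 q7 q6 q8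
  have hphi2bd : ∀ s ∈ Set.Icc r0 t, |phi2 b c2 m2 (Real.exp (-ξ s) • U s)|
      ≤ |b 1 1| * K + |b 1 0| * K + c2 * K ^ 2 + (2 * K + K ^ 2) * Mq m2 Prod.snd Prod.fst := by
    intro s hs
    obtain ⟨q1, q2, q3, q4, _, _, _, _⟩ := hcomp s hs
    rw [phi2_smul]
    exact psi_abs_bound hae2 measurable_snd measurable_fst hInt2 hc2 q3 q1 q4 q2
  have hphi2'bd : ∀ s ∈ Set.Icc r0 t, |phi2 b c2 m2 (Real.exp (-ξ s) • U' s)|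
      ≤ |b 1 1| * K + |b 1 0| * K + c2 * K ^ 2 + (2 * K + K ^ 2) * Mq m2 Prod.snd Prod.fst := by
    intro s hs
    obtain ⟨_, _, _, _, q5, q6, q7, q8⟩ := hcomp s hs
    rw [phi2_smul]
    exact psi_abs_bound hae2 measurable_snd measurable_fst hInt2 hc2 q7 q5 q8 q6
  -- interval integrability
  have hII : ∀ F : ℝ → ℝ, Measurable F → ∀ D : ℝ, (∀ s ∈ Set.Icc r0 t, |F s| ≤ D) →
      ∀ a ∈ Set.Icc r0 t, ∀ b2 ∈ Set.Icc r0 t, IntervalIntegrable F volume a b2 := by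
    intro F hFm D hFD a ha b2 hb2
    have hIcc : IntegrableOn F (Set.Icc r0 t) volume := by
      refine ⟨hFm.aestronglyMeasurable.restrict, ?_⟩
      apply HasFiniteIntegral.restrict_of_bounded (C := D) measure_Icc_lt_top
      rw [ae_restrict_iff' measurableSet_Icc]
      filter_upwards with s hs
      rw [Real.norm_eq_abs]
      exact hFD s hs
    apply IntegrableOn.intervalIntegrable
    apply hIcc.mono_set
    rw [← Set.uIcc_of_le hr0]
    exact Set.uIcc_subset_uIcc (by rwa [Set.uIcc_of_le hr0]) (by rwa [Set.uIcc_of_le hr0])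
  have hF1ii : ∀ a ∈ Set.Icc r0 t, ∀ b2 ∈ Set.Icc r0 t, IntervalIntegrable
      (fun s => Real.exp (ξ s) * phi1 b c1 m1 (Real.exp (-ξ s) • U s)) volume a b2 := by
    apply hII _ hF1m (Real.exp C * (|b 0 0| * K + |b 0 1| * K + c1 * K ^ 2
      + (2 * K + K ^ 2) * Mq m1 Prod.fst Prod.snd))
    intro s hs
    rw [abs_mul, abs_of_nonneg (Real.exp_nonneg _)]
    exact mul_le_mul (heC2 s hs) (hphi1bd s hs) (abs_nonneg _) (Real.exp_nonneg C)
  have hF1'ii : ∀ a ∈ Set.Icc r0 t, ∀ b2 ∈ Set.Icc r0 t, IntervalIntegrable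
      (fun s => Real.exp (ξ s) * phi1 b c1 m1 (Real.exp (-ξ s) • U' s)) volume a b2 := by
    apply hII _ hF1'm (Real.exp C * (|b 0 0| * K + |b 0 1| * K + c1 * K ^ 2
      + (2 * K + K ^ 2) * Mq m1 Prod.fst Prod.snd))
    intro s hs
    rw [abs_mul, abs_of_nonneg (Real.exp_nonneg _)]
    exact mul_le_mul (heC2 s hs) (hphi1'bd s hs) (abs_nonneg _) (Real.exp_nonneg C)
  have hF2ii : ∀ a ∈ Set.Icc r0 t, ∀ b2 ∈ Set.Icc r0 t, IntervalIntegrable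
      (fun s => Real.exp (ξ s) * phi2 b c2 m2 (Real.exp (-ξ s) • U s)) volume a b2 := by
    apply hII _ hF2m (Real.exp C * (|b 1 1| * K + |b 1 0| * K + c2 * K ^ 2
      + (2 * K + K ^ 2) * Mq m2 Prod.snd Prod.fst))
    intro s hs
    rw [abs_mul, abs_of_nonneg (Real.exp_nonneg _)]
    exact mul_le_mul (heC2 s hs) (hphi2bd s hs) (abs_nonneg _) (Real.exp_nonneg C)
  have hF2'ii : ∀ a ∈ Set.Icc r0 t, ∀ b2 ∈ Set.Icc r0 t, IntervalIntegrable
      (fun s => Real.exp (ξ s) * phi2 b c2 m2 (Real.exp (-ξ s) • U' s)) volume a b2 := by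
    apply hII _ hF2'm (Real.exp C * (|b 1 1| * K + |b 1 0| * K + c2 * K ^ 2
      + (2 * K + K ^ 2) * Mq m2 Prod.snd Prod.fst))
    intro s hs
    rw [abs_mul, abs_of_nonneg (Real.exp_nonneg _)]
    exact mul_le_mul (heC2 s hs) (hphi2'bd s hs) (abs_nonneg _) (Real.exp_nonneg C)
  -- transferred integral equations
  have hUeq1' : ∀ r ∈ Set.Icc r0 t, (U r).1 = lam.1 - ∫ s in r..t,
      Real.exp (ξ s) * phi1 b c1 m1 (Real.exp (-ξ s) • U s) := by
    intro r hr
    rw [hUeq r hr, hueq1 r hr]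
    congr 1
    apply intervalIntegral.integral_congr
    intro s hs
    rw [Set.uIcc_of_le hr.2] at hs
    have hsI : s ∈ Set.Icc r0 t := ⟨le_trans hr.1 hs.1, hs.2⟩
    simp only
    rw [hUeq s hsI]
  have hUeq2' : ∀ r ∈ Set.Icc r0 t, (U r).2 = lam.2 - ∫ s in r..t,
      Real.exp (ξ s) * phi2 b c2 m2 (Real.exp (-ξ s) • U s) := by
    intro r hr
    rw [hUeq r hr, hueq2 r hr]
    congr 1
    apply intervalIntegral.integral_congr
    intro s hs
    rw [Set.uIcc_of_le hr.2] at hs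
    have hsI : s ∈ Set.Icc r0 t := ⟨le_trans hr.1 hs.1, hs.2⟩
    simp only
    rw [hUeq s hsI]
  have hU'eq1' : ∀ r ∈ Set.Icc r0 t, (U' r).1 = lam'.1 - ∫ s in r..t,
      Real.exp (ξ s) * phi1 b c1 m1 (Real.exp (-ξ s) • U' s) := by
    intro r hr
    rw [hU'eq r hr, hu'eq1 r hr]
    congr 1
    apply intervalIntegral.integral_congr
    intro s hs
    rw [Set.uIcc_of_le hr.2] at hs
    have hsI : s ∈ Set.Icc r0 t := ⟨le_trans hr.1 hs.1, hs.2⟩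
    simp only
    rw [hU'eq s hsI]
  have hU'eq2' : ∀ r ∈ Set.Icc r0 t, (U' r).2 = lam'.2 - ∫ s in r..t,
      Real.exp (ξ s) * phi2 b c2 m2 (Real.exp (-ξ s) • U' s) := by
    intro r hr
    rw [hU'eq r hr, hu'eq2 r hr]
    congr 1
    apply intervalIntegral.integral_congr
    intro s hs
    rw [Set.uIcc_of_le hr.2] at hs
    have hsI : s ∈ Set.Icc r0 t := ⟨le_trans hr.1 hs.1, hs.2⟩
    simp only
    rw [hU'eq s hsI]
  have htmem : t ∈ Set.Icc r0 t := Set.right_mem_Icc.mpr hr0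
  -- step equations
  have hstepU1 : ∀ a ∈ Set.Icc r0 t, ∀ b2 ∈ Set.Icc r0 t, a ≤ b2 →
      (U b2).1 - (U a).1 = ∫ s in a..b2,
        Real.exp (ξ s) * phi1 b c1 m1 (Real.exp (-ξ s) • U s) := by
    intro a ha b2 hb2 hab
    have e1 := hUeq1' a ha
    have e2 := hUeq1' b2 hb2
    have hadd := intervalIntegral.integral_add_adjacent_intervals
      (hF1ii a ha b2 hb2) (hF1ii b2 hb2 t htmem)
    linarith only [e1, e2, hadd]
  have hstepU2 : ∀ a ∈ Set.Icc r0 t, ∀ b2 ∈ Set.Icc r0 t, a ≤ b2 →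
      (U b2).2 - (U a).2 = ∫ s in a..b2,
        Real.exp (ξ s) * phi2 b c2 m2 (Real.exp (-ξ s) • U s) := by
    intro a ha b2 hb2 hab
    have e1 := hUeq2' a ha
    have e2 := hUeq2' b2 hb2
    have hadd := intervalIntegral.integral_add_adjacent_intervals
      (hF2ii a ha b2 hb2) (hF2ii b2 hb2 t htmem)
    linarith only [e1, e2, hadd]
  have hstepU'1 : ∀ a ∈ Set.Icc r0 t, ∀ b2 ∈ Set.Icc r0 t, a ≤ b2 →
      (U' b2).1 - (U' a).1 = ∫ s in a..b2,
        Real.exp (ξ s) * phi1 b c1 m1 (Real.exp (-ξ s) • U' s) := by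
    intro a ha b2 hb2 hab
    have e1 := hU'eq1' a ha
    have e2 := hU'eq1' b2 hb2
    have hadd := intervalIntegral.integral_add_adjacent_intervals
      (hF1'ii a ha b2 hb2) (hF1'ii b2 hb2 t htmem)
    linarith only [e1, e2, hadd]
  have hstepU'2 : ∀ a ∈ Set.Icc r0 t, ∀ b2 ∈ Set.Icc r0 t, a ≤ b2 →
      (U' b2).2 - (U' a).2 = ∫ s in a..b2,
        Real.exp (ξ s) * phi2 b c2 m2 (Real.exp (-ξ s) • U' s) := by
    intro a ha b2 hb2 hab
    have e1 := hU'eq2' a ha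
    have e2 := hU'eq2' b2 hb2
    have hadd := intervalIntegral.integral_add_adjacent_intervals
      (hF2'ii a ha b2 hb2) (hF2'ii b2 hb2 t htmem)
    linarith only [e1, e2, hadd]
  -- the exponential weight
  have hEcont : Continuous fun r : ℝ => Real.exp (L' * (t - r)) :=
    (continuous_const.mul (continuous_const.sub continuous_id)).rexp
  have hEint : ∀ a b2 : ℝ, ∫ s in a..b2, L' * Real.exp (L' * (t - s))
      = Real.exp (L' * (t - a)) - Real.exp (L' * (t - b2)) := by
    intro a b2
    have hd : ∀ s : ℝ, HasDerivAt (fun r => -Real.exp (L' * (t - r)))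
        (L' * Real.exp (L' * (t - s))) s := by
      intro s
      have h1 : HasDerivAt (fun r : ℝ => t - r) (-1) s := (hasDerivAt_id s).const_sub t
      have h2 : HasDerivAt (fun r : ℝ => L' * (t - r)) (L' * -1) s := h1.const_mul L'
      have h4 : HasDerivAt (fun r => -Real.exp (L' * (t - r))) _ s := h2.exp.neg
      convert h4 using 1
      ring
    have hcont : Continuous fun s : ℝ => L' * Real.exp (L' * (t - s)) :=
      continuous_const.mul hEcont
    rw [intervalIntegral.integral_eq_sub_of_hasDerivAt (fun s _ => hd s)
      (hcont.intervalIntegrable a b2)]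
    ring
  -- the main ε-claim
  have main : ∀ ε : ℝ, 0 < ε → ∀ r ∈ Set.Icc r0 t,
      0 < (U' r).1 + ε * Real.exp (L' * (t - r)) - (U r).1 ∧
      0 < (U' r).2 + ε * Real.exp (L' * (t - r)) - (U r).2 := by
    intro ε hε
    have hEt : Real.exp (L' * (t - t)) = 1 := by rw [sub_self, mul_zero, Real.exp_zero]
    have hUt1 : (U t).1 = lam.1 := by
      have := hUeq1' t htmem
      rwa [intervalIntegral.integral_same, sub_zero] at this
    have hUt2 : (U t).2 = lam.2 := by
      have := hUeq2' t htmem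
      rwa [intervalIntegral.integral_same, sub_zero] at this
    have hU't1 : (U' t).1 = lam'.1 := by
      have := hU'eq1' t htmem
      rwa [intervalIntegral.integral_same, sub_zero] at this
    have hU't2 : (U' t).2 = lam'.2 := by
      have := hU'eq2' t htmem
      rwa [intervalIntegral.integral_same, sub_zero] at this
    refine no_touch hr0 hε _ _
      (fun s => Real.exp (ξ s) * phi1 b c1 m1 (Real.exp (-ξ s) • U' s)
        - Real.exp (ξ s) * phi1 b c1 m1 (Real.exp (-ξ s) • U s)
        - ε * (L' * Real.exp (L' * (t - s))))
      (fun s => Real.exp (ξ s) * phi2 b c2 m2 (Real.exp (-ξ s) • U' s)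
        - Real.exp (ξ s) * phi2 b c2 m2 (Real.exp (-ξ s) • U s)
        - ε * (L' * Real.exp (L' * (t - s))))
      ?_ ?_ ?_ ?_ ?_ ?_ ?_ ?_ ?_ ?_
    · exact ((continuous_fst.comp hU'c).add (continuous_const.mul hEcont)).sub
        (continuous_fst.comp hUc)
    · exact ((continuous_snd.comp hU'c).add (continuous_const.mul hEcont)).sub
        (continuous_snd.comp hUc)
    · -- step for g1
      intro a ha b2 hb2 hab
      have s1 := hstepU'1 a ha b2 hb2 hab
      have s2 := hstepU1 a ha b2 hb2 hab
      have s3 := hEint a b2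
      have hi1 := hF1'ii a ha b2 hb2
      have hi2 := hF1ii a ha b2 hb2
      have hiE : IntervalIntegrable (fun s => ε * (L' * Real.exp (L' * (t - s))))
          volume a b2 :=
        (continuous_const.mul (continuous_const.mul hEcont)).intervalIntegrable a b2
      rw [intervalIntegral.integral_sub (hi1.sub hi2) hiE,
        intervalIntegral.integral_sub hi1 hi2, intervalIntegral.integral_const_mul, s3]
      linarith only [s1, s2]
    · -- step for g2
      intro a ha b2 hb2 hab
      have s1 := hstepU'2 a ha b2 hb2 hab
      have s2 := hstepU2 a ha b2 hb2 hab
      have s3 := hEint a b2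
      have hi1 := hF2'ii a ha b2 hb2
      have hi2 := hF2ii a ha b2 hb2
      have hiE : IntervalIntegrable (fun s => ε * (L' * Real.exp (L' * (t - s))))
          volume a b2 :=
        (continuous_const.mul (continuous_const.mul hEcont)).intervalIntegrable a b2
      rw [intervalIntegral.integral_sub (hi1.sub hi2) hiE,
        intervalIntegral.integral_sub hi1 hi2, intervalIntegral.integral_const_mul, s3]
      linarith only [s1, s2]
    · -- integrability for H1
      intro a ha b2 hb2
      exact ((hF1'ii a ha b2 hb2).sub (hF1ii a ha b2 hb2)).sub
        ((continuous_const.mul (continuous_const.mul hEcont)).intervalIntegrable a b2)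
    · -- integrability for H2
      intro a ha b2 hb2
      exact ((hF2'ii a ha b2 hb2).sub (hF2ii a ha b2 hb2)).sub
        ((continuous_const.mul (continuous_const.mul hEcont)).intervalIntegrable a b2)
    · -- pointwise bound for H1
      intro s hsI hg1 hg2 hsm
      obtain ⟨q1, q2, q3, q4, q5, q6, q7, q8⟩ := hcomp s hsI
      have hXe : Real.exp (ξ s) * Real.exp (-ξ s) = 1 := by rw [← Real.exp_add]; simp
      have hEs1 : (1:ℝ) ≤ Real.exp (L' * (t - s)) := by
        rw [← Real.exp_zero]
        apply Real.exp_le_exp.mpr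
        exact mul_nonneg hL'0 (by linarith only [hsI.2])
      have hη0 : 0 ≤ ε * Real.exp (L' * (t - s)) * Real.exp (-ξ s) := by positivity
      have hcond1 : Real.exp (-ξ s) * (U s).1
          ≤ Real.exp (-ξ s) * (U' s).1 + ε * Real.exp (L' * (t - s)) * Real.exp (-ξ s) := by
        have h0 : (U s).1 ≤ (U' s).1 + ε * Real.exp (L' * (t - s)) := by linarith only [hg1]
        have h1 := mul_le_mul_of_nonneg_left h0 (Real.exp_nonneg (-ξ s))
        linarith only [h1]
      have hcond2 : Real.exp (-ξ s) * (U s).2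
          ≤ Real.exp (-ξ s) * (U' s).2 + ε * Real.exp (L' * (t - s)) * Real.exp (-ξ s) := by
        have h0 : (U s).2 ≤ (U' s).2 + ε * Real.exp (L' * (t - s)) := by linarith only [hg2]
        have h1 := mul_le_mul_of_nonneg_left h0 (Real.exp_nonneg (-ξ s))
        linarith only [h1]
      have hkey := psi_key (β := b 0 0) (γ := b 0 1) (p := Prod.fst) (q := Prod.snd)
        hae1 measurable_fst measurable_snd hInt1 hc1 hadm1 hK0 hη0
        q1 q3 q5 q7 q2 q4 q6 q8 hcond1 hcond2
      have hphidiff : phi1 b c1 m1 (Real.exp (-ξ s) • U' s)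
          - phi1 b c1 m1 (Real.exp (-ξ s) • U s)
          ≤ L1a * (Real.exp (-ξ s) * (U' s).1 - Real.exp (-ξ s) * (U s).1)
            + L2a * (ε * Real.exp (L' * (t - s)) * Real.exp (-ξ s)) := by
        rw [phi1_smul, phi1_smul]
        calc _ ≤ _ := hkey
          _ = L1a * (Real.exp (-ξ s) * (U' s).1 - Real.exp (-ξ s) * (U s).1)
            + L2a * (ε * Real.exp (L' * (t - s)) * Real.exp (-ξ s)) := by
              rw [hL2a, hL1a]
      have hXpos : (0:ℝ) < Real.exp (ξ s) := Real.exp_pos _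
      have hmul := mul_le_mul_of_nonneg_left hphidiff hXpos.le
      have halg : Real.exp (ξ s) * (L1a * (Real.exp (-ξ s) * (U' s).1
            - Real.exp (-ξ s) * (U s).1)
          + L2a * (ε * Real.exp (L' * (t - s)) * Real.exp (-ξ s)))
          = (Real.exp (ξ s) * Real.exp (-ξ s)) * (L1a * ((U' s).1 - (U s).1)
            + L2a * (ε * Real.exp (L' * (t - s)))) := by ring
      rw [mul_sub, halg, hXe, one_mul] at hmul
      have p1 : L1a * ((U' s).1 + ε * Real.exp (L' * (t - s)) - (U s).1) ≤ L1a * ε :=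
        mul_le_mul_of_nonneg_left hsm hL1a0
      have c1' : L2a - L1a - L' ≤ -(L1a + 1) := by linarith only [hL'a, hL2a]
      have p2 : (L2a - L1a - L') * (ε * Real.exp (L' * (t - s)))
          ≤ (-(L1a + 1)) * (ε * Real.exp (L' * (t - s))) :=
        mul_le_mul_of_nonneg_right c1' (by positivity)
      have p3 : (-(L1a + 1)) * (ε * Real.exp (L' * (t - s))) ≤ (-(L1a + 1)) * (ε * 1) := by
        apply mul_le_mul_of_nonpos_left ?_ (by linarith only [hL1a0])
        exact mul_le_mul_of_nonneg_left hEs1 hε.le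
      beta_reduce
      linarith only [hmul, p1, p2, p3]
    · -- pointwise bound for H2
      intro s hsI hg1 hg2 hsm
      obtain ⟨q1, q2, q3, q4, q5, q6, q7, q8⟩ := hcomp s hsI
      have hXe : Real.exp (ξ s) * Real.exp (-ξ s) = 1 := by rw [← Real.exp_add]; simp
      have hEs1 : (1:ℝ) ≤ Real.exp (L' * (t - s)) := by
        rw [← Real.exp_zero]
        apply Real.exp_le_exp.mpr
        exact mul_nonneg hL'0 (by linarith only [hsI.2])
      have hη0 : 0 ≤ ε * Real.exp (L' * (t - s)) * Real.exp (-ξ s) := by positivity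
      have hcond1 : Real.exp (-ξ s) * (U s).2
          ≤ Real.exp (-ξ s) * (U' s).2 + ε * Real.exp (L' * (t - s)) * Real.exp (-ξ s) := by
        have h0 : (U s).2 ≤ (U' s).2 + ε * Real.exp (L' * (t - s)) := by linarith only [hg2]
        have h1 := mul_le_mul_of_nonneg_left h0 (Real.exp_nonneg (-ξ s))
        linarith only [h1]
      have hcond2 : Real.exp (-ξ s) * (U s).1
          ≤ Real.exp (-ξ s) * (U' s).1 + ε * Real.exp (L' * (t - s)) * Real.exp (-ξ s) := by
        have h0 : (U s).1 ≤ (U' s).1 + ε * Real.exp (L' * (t - s)) := by linarith only [hg1]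
        have h1 := mul_le_mul_of_nonneg_left h0 (Real.exp_nonneg (-ξ s))
        linarith only [h1]
      have hkey := psi_key (β := b 1 1) (γ := b 1 0) (p := Prod.snd) (q := Prod.fst)
        hae2 measurable_snd measurable_fst hInt2 hc2 hadm2 hK0 hη0
        q3 q1 q7 q5 q4 q2 q8 q6 hcond1 hcond2
      have hphidiff : phi2 b c2 m2 (Real.exp (-ξ s) • U' s)
          - phi2 b c2 m2 (Real.exp (-ξ s) • U s)
          ≤ L1b * (Real.exp (-ξ s) * (U' s).2 - Real.exp (-ξ s) * (U s).2)
            + L2b * (ε * Real.exp (L' * (t - s)) * Real.exp (-ξ s)) := by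
        rw [phi2_smul, phi2_smul]
        calc _ ≤ _ := hkey
          _ = L1b * (Real.exp (-ξ s) * (U' s).2 - Real.exp (-ξ s) * (U s).2)
            + L2b * (ε * Real.exp (L' * (t - s)) * Real.exp (-ξ s)) := by
              rw [hL2b, hL1b]
      have hXpos : (0:ℝ) < Real.exp (ξ s) := Real.exp_pos _
      have hmul := mul_le_mul_of_nonneg_left hphidiff hXpos.le
      have halg : Real.exp (ξ s) * (L1b * (Real.exp (-ξ s) * (U' s).2
            - Real.exp (-ξ s) * (U s).2)
          + L2b * (ε * Real.exp (L' * (t - s)) * Real.exp (-ξ s)))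
          = (Real.exp (ξ s) * Real.exp (-ξ s)) * (L1b * ((U' s).2 - (U s).2)
            + L2b * (ε * Real.exp (L' * (t - s)))) := by ring
      rw [mul_sub, halg, hXe, one_mul] at hmul
      have p1 : L1b * ((U' s).2 + ε * Real.exp (L' * (t - s)) - (U s).2) ≤ L1b * ε :=
        mul_le_mul_of_nonneg_left hsm hL1b0
      have c1' : L2b - L1b - L' ≤ -(L1b + 1) := by linarith only [hL'b, hL2b]
      have p2 : (L2b - L1b - L') * (ε * Real.exp (L' * (t - s)))
          ≤ (-(L1b + 1)) * (ε * Real.exp (L' * (t - s))) :=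
        mul_le_mul_of_nonneg_right c1' (by positivity)
      have p3 : (-(L1b + 1)) * (ε * Real.exp (L' * (t - s))) ≤ (-(L1b + 1)) * (ε * 1) := by
        apply mul_le_mul_of_nonpos_left ?_ (by linarith only [hL1b0])
        exact mul_le_mul_of_nonneg_left hEs1 hε.le
      beta_reduce
      linarith only [hmul, p1, p2, p3]
    · -- endpoint for g1
      rw [hUt1, hU't1, hEt]
      linarith only [hle1, hε]
    · -- endpoint for g2
      rw [hUt2, hU't2, hEt]
      linarith only [hle2, hε]
  -- conclusion
  intro r hr
  have hEr : (0:ℝ) < Real.exp (L' * (t - r)) := Real.exp_pos _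
  constructor
  · by_contra hcon
    push_neg at hcon
    have hd : 0 < (u r).1 - (u' r).1 := by linarith only [hcon]
    have hεpos : 0 < ((u r).1 - (u' r).1) / (2 * Real.exp (L' * (t - r))) := by positivity
    have h2 := (main _ hεpos r hr).1
    rw [hUeq r hr, hU'eq r hr] at h2
    have heq : (((u r).1 - (u' r).1) / (2 * Real.exp (L' * (t - r))))
        * Real.exp (L' * (t - r)) = ((u r).1 - (u' r).1) / 2 := by
      field_simp
    rw [heq] at h2
    linarith only [h2, hcon]
  · by_contra hcon
    push_neg at hcon
    have hd : 0 < (u r).2 - (u' r).2 := by linarith only [hcon]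
    have hεpos : 0 < ((u r).2 - (u' r).2) / (2 * Real.exp (L' * (t - r))) := by positivity
    have h2 := (main _ hεpos r hr).2
    rw [hUeq r hr, hU'eq r hr] at h2
    have heq : (((u r).2 - (u' r).2) / (2 * Real.exp (L' * (t - r))))
        * Real.exp (L' * (t - r)) = ((u r).2 - (u' r).2) / 2 := by
      field_simp
    rw [heq] at h2
    linarith only [h2, hcon]
end
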